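/- arXiv:1306.5354 — 7 statements merged into one kernel-verified Lean document; each statement's English description precedes it below -/
import Mathlib

section
/- With F_L^j defined as the min-max over j-dimensional subspaces of L of ‖(A−t)u‖/‖u‖, the map t ↦ t + F_L^j(t) is monotonically non-decreasing, and t ↦ t − F_L^j(t) is also monotonically non-decreasing. -/
open scoped InnerProductSpace

variable {H : Type*} [NormedAddCommGroup H] [InnerProductSpace ℂ H] [CompleteSpace H]

/-- `Fapp A L j t` : the `j`-th min-max value of `‖(A-t)u‖/‖u‖` over
`j`-dimensional subspaces of `L`. -/
noncomputable def Fapp (A : H →L[ℂ] H) (L : Submodule ℂ H) (j : ℕ) (t : ℝ) : ℝ :=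
  sInf {r : ℝ | 0 ≤ r ∧ ∃ V : Submodule ℂ H, V ≤ L ∧ Module.finrank ℂ V = j ∧
    ∀ u ∈ V, ‖A u - (t : ℂ) • u‖ ≤ r * ‖u‖}

/-- `dd A j t` : the `j`-th min-max value of `‖(A-t)u‖/‖u‖` over all
`j`-dimensional subspaces of the space. -/
noncomputable def dd (A : H →L[ℂ] H) (j : ℕ) (t : ℝ) : ℝ :=
  sInf {r : ℝ | 0 ≤ r ∧ ∃ V : Submodule ℂ H, Module.finrank ℂ V = j ∧
    ∀ u ∈ V, ‖A u - (t : ℂ) • u‖ ≤ r * ‖u‖}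

/-- `tr 1_{[a,b]}(A) ≥ j` : there is a `j`-dimensional subspace on which the
quadratic form of `(A-a)(A-b)` is non-positive. -/
def countGeIcc (A : H →L[ℂ] H) (a b : ℝ) (j : ℕ) : Prop :=
  ∃ V : Submodule ℂ H, Module.finrank ℂ V = j ∧
    ∀ u ∈ V, (inner ℂ (A u - (a : ℂ) • u) (A u - (b : ℂ) • u) : ℂ).re ≤ 0

/-- `tr 1_{(a,b]}(A) ≥ j`. -/
def countGeIoc (A : H →L[ℂ] H) (a b : ℝ) (j : ℕ) : Prop :=
  ∃ V : Submodule ℂ H, Module.finrank ℂ V = j ∧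
    (∀ u ∈ V, (inner ℂ (A u - (a : ℂ) • u) (A u - (b : ℂ) • u) : ℂ).re ≤ 0) ∧
    V ⊓ LinearMap.ker ((A - (a : ℂ) • (1 : H →L[ℂ] H) : H →L[ℂ] H) : H →ₗ[ℂ] H) = ⊥

/-- `tr 1_{[a,b)}(A) ≥ j`. -/
def countGeIco (A : H →L[ℂ] H) (a b : ℝ) (j : ℕ) : Prop :=
  ∃ V : Submodule ℂ H, Module.finrank ℂ V = j ∧
    (∀ u ∈ V, (inner ℂ (A u - (a : ℂ) • u) (A u - (b : ℂ) • u) : ℂ).re ≤ 0) ∧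
    V ⊓ LinearMap.ker ((A - (b : ℂ) • (1 : H →L[ℂ] H) : H →L[ℂ] H) : H →ₗ[ℂ] H) = ⊥

/-- `nminus A j t` : the `j`-th spectral point of `A` to the left of `t`,
counting multiplicities, i.e. `sup {s < t : tr 1_{(s,t]}(A) ≥ j}`. -/
noncomputable def nminus (A : H →L[ℂ] H) (j : ℕ) (t : ℝ) : ℝ :=
  sSup {s : ℝ | s < t ∧ countGeIoc A s t j}

/-- `nplus A j t` : the `j`-th spectral point of `A` to the right of `t`. -/
noncomputable def nplus (A : H →L[ℂ] H) (j : ℕ) (t : ℝ) : ℝ :=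
  sInf {s : ℝ | t < s ∧ countGeIco A t s j}

/-- The real spectrum of `A`. -/
def specRe (A : H →L[ℂ] H) : Set ℝ := {x : ℝ | (x : ℂ) ∈ spectrum ℂ A}

set_option linter.unusedSectionVars false in
lemma exists_dim (L : Submodule ℂ H) [FiniteDimensional ℂ L] (j : ℕ)
    (hj : j ≤ Module.finrank ℂ L) :
    ∃ V : Submodule ℂ H, V ≤ L ∧ Module.finrank ℂ V = j := by
  classical
  let b := Module.finBasis ℂ L
  let v : Fin j → H := fun i => (b (Fin.castLE hj i) : H)
  have hli : LinearIndependent ℂ v := by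
    have h1 : LinearIndependent ℂ (fun i : Fin j => b (Fin.castLE hj i)) :=
      b.linearIndependent.comp _ (Fin.castLE_injective hj)
    exact h1.map' L.subtype (Submodule.ker_subtype L)
  refine ⟨Submodule.span ℂ (Set.range v), ?_, ?_⟩
  · rw [Submodule.span_le]
    rintro x ⟨i, rfl⟩
    exact (b (Fin.castLE hj i)).2
  · rw [finrank_span_eq_card hli, Fintype.card_fin]

set_option linter.unusedSectionVars false in
lemma Fset_nonempty (A : H →L[ℂ] H) (L : Submodule ℂ H) [FiniteDimensional ℂ L]
    (j : ℕ) (hj : j ≤ Module.finrank ℂ L) (t : ℝ) :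
    ({r : ℝ | 0 ≤ r ∧ ∃ V : Submodule ℂ H, V ≤ L ∧ Module.finrank ℂ V = j ∧
      ∀ u ∈ V, ‖A u - (t : ℂ) • u‖ ≤ r * ‖u‖}).Nonempty := by
  obtain ⟨V, hVL, hVr⟩ := exists_dim L j hj
  refine ⟨‖A‖ + |t|, by positivity, V, hVL, hVr, fun u _ => ?_⟩
  calc ‖A u - (t : ℂ) • u‖ ≤ ‖A u‖ + ‖(t : ℂ) • u‖ := norm_sub_le _ _
    _ ≤ ‖A‖ * ‖u‖ + |t| * ‖u‖ := by
        gcongr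
        · exact A.le_opNorm u
        · rw [norm_smul, Complex.norm_real, Real.norm_eq_abs]
    _ = (‖A‖ + |t|) * ‖u‖ := by ring

set_option linter.unusedSectionVars false in
lemma Fapp_lip (A : H →L[ℂ] H) (L : Submodule ℂ H) [FiniteDimensional ℂ L]
    (j : ℕ) (hj : j ≤ Module.finrank ℂ L) (s t : ℝ) :
    Fapp A L j t ≤ Fapp A L j s + |t - s| := by
  unfold Fapp
  rw [← sub_le_iff_le_add]
  apply le_csInf (Fset_nonempty A L j hj s)
  rintro r ⟨hr, V, hVL, hVr, hV⟩
  rw [sub_le_iff_le_add]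
  apply csInf_le ⟨0, fun x hx => hx.1⟩
  refine ⟨by positivity, V, hVL, hVr, fun u hu => ?_⟩
  have : A u - (t : ℂ) • u = (A u - (s : ℂ) • u) + ((s : ℂ) - t) • u := by
    rw [sub_smul]; abel
  rw [this]
  calc ‖(A u - (s : ℂ) • u) + ((s : ℂ) - t) • u‖
      ≤ ‖A u - (s : ℂ) • u‖ + ‖((s : ℂ) - t) • u‖ := norm_add_le _ _
    _ ≤ r * ‖u‖ + |t - s| * ‖u‖ := by
        gcongr
        · exact hV u hu
        · rw [norm_smul]
          gcongr
          rw [← Complex.ofReal_sub, Complex.norm_real, Real.norm_eq_abs, abs_sub_comm]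
    _ = (r + |t - s|) * ‖u‖ := by ring

/-- `t ↦ t + F_L^j(t)` and `t ↦ t - F_L^j(t)` are monotone
non-decreasing. -/
theorem stmt_1 (A : H →L[ℂ] H) (hA : IsSelfAdjoint A)
    (L : Submodule ℂ H) [FiniteDimensional ℂ L]
    (j : ℕ) (hj1 : 1 ≤ j) (hj : j ≤ Module.finrank ℂ L) :
    Monotone (fun t : ℝ => t + Fapp A L j t) ∧
      Monotone (fun t : ℝ => t - Fapp A L j t) := by
  constructor
  · intro s t hst
    have h := Fapp_lip A L j hj t s
    rw [abs_of_nonpos (by linarith)] at h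
    simp only
    linarith
  · intro s t hst
    have h := Fapp_lip A L j hj s t
    rw [abs_of_nonneg (by linarith)] at h
    simp only
    linarith
end

section
/- Let t ∈ ℝ and let n_j^-(t) = sup{s < t : tr 1_{(s,t]}(A) ≥ j} be the j-th spectral point of A to the left of t counting multiplicity. If t^- < t and F_L^j(t^-) ≤ t − t^-, then t^- − F_L^j(t^-) ≤ n_j^-(t). -/
open scoped InnerProductSpace
open Module
set_option linter.unusedSectionVars false
set_option maxHeartbeats 1000000

variable {H : Type*} [NormedAddCommGroup H] [InnerProductSpace ℂ H] [CompleteSpace H]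

noncomputable def Slin (L : Submodule ℂ H) (j : ℕ) (f : Fin j → L) :
    EuclideanSpace ℂ (Fin j) →ₗ[ℂ] H :=
  (PiLp.basisFun 2 ℂ (Fin j)).constr ℂ (fun i => (f i : H))

lemma Slin_apply (L : Submodule ℂ H) (j : ℕ) (f : Fin j → L) (c : EuclideanSpace ℂ (Fin j)) :
    Slin L j f c = ∑ i, c i • (f i : H) := by
  simp [Slin, Basis.constr_apply_fintype, Basis.equivFun_apply, PiLp.basisFun_repr]

lemma coe_orthonormal {L : Submodule ℂ H} {ι : Type*} [DecidableEq ι] {v : ι → L} (hv : Orthonormal ℂ v) :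
    Orthonormal ℂ (fun i => (v i : H)) := by
  rw [orthonormal_iff_ite] at hv ⊢
  intro i k
  rw [← Submodule.coe_inner]
  exact hv i k

lemma norm_sum_orthonormal {j : ℕ} {v : Fin j → H} (hv : Orthonormal ℂ v)
    (c : EuclideanSpace ℂ (Fin j)) : ‖∑ i, c i • v i‖ = ‖c‖ := by
  have h1 : (inner ℂ (∑ i, c i • v i) (∑ i, c i • v i) : ℂ)
      = ∑ i, (starRingEnd ℂ) (c i) * c i := hv.inner_sum c c Finset.univ
  rw [@norm_eq_sqrt_re_inner ℂ, h1, EuclideanSpace.norm_eq]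
  congr 1
  rw [map_sum]
  refine Finset.sum_congr rfl fun i _ => ?_
  rw [RCLike.conj_mul]
  norm_cast

set_option linter.unusedSectionVars false

noncomputable def Tmap (B : H →L[ℂ] H) (L : Submodule ℂ H) [FiniteDimensional ℂ L] (j : ℕ) :
    (Fin j → L) →ₗ[ℂ] (EuclideanSpace ℂ (Fin j) →L[ℂ] H) :=
  ((ContinuousLinearMap.compL ℂ (EuclideanSpace ℂ (Fin j)) H H B).toLinearMap).comp
    (((LinearMap.toContinuousLinearMap (𝕜 := ℂ) (E := EuclideanSpace ℂ (Fin j)) (F' := H)).toLinearMap).comp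
      ((((PiLp.basisFun 2 ℂ (Fin j)).constr ℂ).toLinearMap).comp
        (L.subtype.compLeft (Fin j))))

lemma Tmap_apply (B : H →L[ℂ] H) (L : Submodule ℂ H) [FiniteDimensional ℂ L] (j : ℕ)
    (f : Fin j → L) (c : EuclideanSpace ℂ (Fin j)) :
    Tmap B L j f c = B (Slin L j f c) := rfl

lemma Fapp_attained (A : H →L[ℂ] H) (L : Submodule ℂ H) [FiniteDimensional ℂ L]
    (j : ℕ) (hj1 : 1 ≤ j) (hj : j ≤ finrank ℂ L) (tm : ℝ) :
    0 ≤ Fapp A L j tm ∧ ∃ V : Submodule ℂ H, V ≤ L ∧ finrank ℂ V = j ∧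
      ∀ u ∈ V, ‖A u - (tm : ℂ) • u‖ ≤ Fapp A L j tm * ‖u‖ := by
  classical
  set B : H →L[ℂ] H := A - (tm : ℂ) • (1 : H →L[ℂ] H) with hB
  have hBapp : ∀ u : H, B u = A u - (tm : ℂ) • u := by
    intro u; simp [hB]
  set K : Set (Fin j → L) := {f | Orthonormal ℂ (fun i => ((f i : H)))} with hKdef
  -- K is closed
  have hKc : IsClosed K := by
    have : K = ⋂ (i : Fin j) (k : Fin j),
        {f : Fin j → L | (inner ℂ ((f i : L) : H) ((f k : L) : H) : ℂ)
          = if i = k then 1 else 0} := by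
      ext f
      simp only [hKdef, Set.mem_setOf_eq, orthonormal_iff_ite, Set.mem_iInter, Set.mem_setOf_eq]
    rw [this]
    refine isClosed_iInter fun i => isClosed_iInter fun k => isClosed_eq ?_ continuous_const
    exact Continuous.inner (continuous_subtype_val.comp (continuous_apply i))
      (continuous_subtype_val.comp (continuous_apply k))
  -- K is contained in a ball
  have hKb : K ⊆ Metric.closedBall 0 1 := by
    intro f hf
    rw [Metric.mem_closedBall, dist_zero_right]
    refine (pi_norm_le_iff_of_nonneg zero_le_one).2 fun i => ?_
    have := hf.1 i
    simpa using this.le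
  have hKcomp : IsCompact K := (isCompact_closedBall (0 : Fin j → L) 1).of_isClosed_subset hKc hKb
  -- K is nonempty
  have hKne : K.Nonempty := by
    refine ⟨fun i => (stdOrthonormalBasis ℂ L) (Fin.castLE hj i), ?_⟩
    exact coe_orthonormal ((stdOrthonormalBasis ℂ L).orthonormal.comp _ (Fin.castLE_injective hj))
  -- minimize g
  have hgc : Continuous fun f : Fin j → L => ‖Tmap B L j f‖ :=
    (Tmap B L j).continuous_of_finiteDimensional.norm
  obtain ⟨f₀, hf₀K, hmin⟩ := hKcomp.exists_isMinOn hKne hgc.continuousOn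
  set g₀ : ℝ := ‖Tmap B L j f₀‖ with hg₀
  -- the candidate subspace
  have hSnorm : ∀ c : EuclideanSpace ℂ (Fin j), ‖Slin L j f₀ c‖ = ‖c‖ := by
    intro c; rw [Slin_apply]; exact norm_sum_orthonormal hf₀K c
  have hinj : Function.Injective (Slin L j f₀) := by
    intro a b hab
    have h0 : ‖Slin L j f₀ (a - b)‖ = 0 := by rw [map_sub, hab, sub_self, norm_zero]
    rw [hSnorm] at h0
    exact sub_eq_zero.1 (norm_eq_zero.1 h0)
  set V : Submodule ℂ H := LinearMap.range (Slin L j f₀) with hV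
  have hVL : V ≤ L := by
    rintro x ⟨c, rfl⟩
    rw [Slin_apply]
    exact Submodule.sum_mem L fun i _ => L.smul_mem _ (f₀ i).2
  have hVrank : finrank ℂ V = j := by
    rw [hV, LinearMap.finrank_range_of_inj hinj, finrank_euclideanSpace_fin]
  have hVbound : ∀ u ∈ V, ‖A u - (tm : ℂ) • u‖ ≤ g₀ * ‖u‖ := by
    rintro u ⟨c, rfl⟩
    rw [← hBapp, ← Tmap_apply, hSnorm]
    exact (Tmap B L j f₀).le_opNorm c
  -- g₀ is a member of the defining set
  set S : Set ℝ := {r : ℝ | 0 ≤ r ∧ ∃ V : Submodule ℂ H, V ≤ L ∧ finrank ℂ V = j ∧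
    ∀ u ∈ V, ‖A u - (tm : ℂ) • u‖ ≤ r * ‖u‖} with hS
  have hmem : g₀ ∈ S := ⟨norm_nonneg _, V, hVL, hVrank, hVbound⟩
  -- g₀ is a lower bound of S
  have hlb : ∀ r ∈ S, g₀ ≤ r := by
    rintro r ⟨hr0, W, hWL, hWrank, hWbound⟩
    haveI : FiniteDimensional ℂ W := finite_of_finrank_pos (by rw [hWrank]; omega)
    set b := stdOrthonormalBasis ℂ W
    set f : Fin j → L := fun i => ⟨(b (Fin.cast hWrank.symm i) : H), hWL (b (Fin.cast hWrank.symm i)).2⟩ with hf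
    have hforth : Orthonormal ℂ (fun i => ((f i : L) : H)) := by
      have h1 : Orthonormal ℂ (fun i : Fin (finrank ℂ W) => ((b i : W) : H)) :=
        coe_orthonormal b.orthonormal
      exact h1.comp _ (Fin.cast_injective _)
    have hfK : f ∈ K := hforth
    have h1 : g₀ ≤ ‖Tmap B L j f‖ := hmin hfK
    refine h1.trans ?_
    refine ContinuousLinearMap.opNorm_le_bound _ hr0 fun c => ?_
    have hmemW : Slin L j f c ∈ W := by
      rw [Slin_apply]
      refine Submodule.sum_mem W fun i _ => Submodule.smul_mem W _ ?_
      exact (b (Fin.cast hWrank.symm i)).2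
    have := hWbound _ hmemW
    rw [Tmap_apply, hBapp]
    calc ‖A (Slin L j f c) - (tm : ℂ) • Slin L j f c‖ ≤ r * ‖Slin L j f c‖ := this
      _ = r * ‖c‖ := by rw [Slin_apply, norm_sum_orthonormal hforth]
  have hFeq : Fapp A L j tm = g₀ := by
    refine le_antisymm (csInf_le ⟨0, fun r hr => hr.1⟩ hmem) (le_csInf ⟨g₀, hmem⟩ hlb)
  rw [hFeq]
  exact ⟨norm_nonneg _, V, hVL, hVrank, hVbound⟩


lemma form_le {A : H →L[ℂ] H} {tm s t F : ℝ} (u : H)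
    (hw : ‖A u - (tm : ℂ) • u‖ ≤ F * ‖u‖) (hF0 : 0 ≤ F)
    (hs : F ≤ tm - s) (ht : F ≤ t - tm) :
    (inner ℂ (A u - (s : ℂ) • u) (A u - (t : ℂ) • u) : ℂ).re ≤ 0 := by
  set w : H := A u - (tm : ℂ) • u with hwdef
  set α : ℝ := tm - s with hα
  set β : ℝ := t - tm with hβ
  have h1 : A u - (s : ℂ) • u = w + (α : ℂ) • u := by
    rw [hwdef, hα]; push_cast; module
  have h2 : A u - (t : ℂ) • u = w - (β : ℂ) • u := by
    rw [hwdef, hβ]; push_cast; module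
  rw [h1, h2]
  have expand : (inner ℂ (w + (α : ℂ) • u) (w - (β : ℂ) • u) : ℂ).re
      = ‖w‖ ^ 2 + (α - β) * (inner ℂ u w : ℂ).re - α * β * ‖u‖ ^ 2 := by
    simp only [inner_add_left, inner_sub_right, inner_smul_left, inner_smul_right,
      Complex.conj_ofReal]
    rw [← inner_conj_symm w u]
    simp only [Complex.add_re, Complex.sub_re, Complex.mul_re, Complex.ofReal_re,
      Complex.ofReal_im, Complex.conj_re, Complex.conj_im]
    have hww : (inner ℂ w w : ℂ).re = ‖w‖ ^ 2 := inner_self_eq_norm_sq (𝕜 := ℂ) w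
    have huu : (inner ℂ u u : ℂ).re = ‖u‖ ^ 2 := inner_self_eq_norm_sq (𝕜 := ℂ) u
    rw [hww, huu]
    ring
  rw [expand]
  have hre : |(inner ℂ u w : ℂ).re| ≤ ‖u‖ * ‖w‖ := by
    refine (Complex.abs_re_le_norm _).trans ?_
    exact norm_inner_le_norm u w
  have hre1 : (inner ℂ u w : ℂ).re ≤ ‖u‖ * ‖w‖ := (abs_le.1 hre).2
  have hre2 : -(‖u‖ * ‖w‖) ≤ (inner ℂ u w : ℂ).re := (abs_le.1 hre).1
  have hu0 : (0:ℝ) ≤ ‖u‖ := norm_nonneg u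
  have hw0 : (0:ℝ) ≤ ‖w‖ := norm_nonneg w
  rcases le_total α β with hab | hab
  · nlinarith [mul_nonneg hu0 hw0, sq_nonneg (‖w‖ - F * ‖u‖), mul_nonneg (sub_nonneg.2 hab) (sub_nonneg.2 hw),
      mul_nonneg (mul_nonneg hu0 hu0) (sub_nonneg.2 hs)]
  · nlinarith [mul_nonneg hu0 hw0, sq_nonneg (‖w‖ - F * ‖u‖), mul_nonneg (sub_nonneg.2 hab) (sub_nonneg.2 hw),
      mul_nonneg (mul_nonneg hu0 hu0) (sub_nonneg.2 ht)]

/-- if `t⁻ < t` and `F_L^j(t⁻) ≤ t - t⁻` then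
`t⁻ - F_L^j(t⁻) ≤ n_j^-(t)`. -/
theorem stmt_3 (A : H →L[ℂ] H) (hA : IsSelfAdjoint A)
    (L : Submodule ℂ H) [FiniteDimensional ℂ L]
    (j : ℕ) (hj1 : 1 ≤ j) (hj : j ≤ Module.finrank ℂ L)
    (t tm : ℝ) (htm : tm < t) (hF : Fapp A L j tm ≤ t - tm) :
    tm - Fapp A L j tm ≤ nminus A j t := by

  obtain ⟨hF0, V, hVL, hVrank, hVb⟩ := Fapp_attained A L j hj1 hj tm
  set F : ℝ := Fapp A L j tm with hFdef
  have hbdd : BddAbove {s : ℝ | s < t ∧ countGeIoc A s t j} :=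
    ⟨t, fun s hs => hs.1.le⟩
  refine le_of_forall_sub_le fun ε hε => ?_
  have hmem : (tm - F - ε) ∈ {s : ℝ | s < t ∧ countGeIoc A s t j} := by
    constructor
    · linarith
    · refine ⟨V, hVrank, fun u hu => ?_, ?_⟩
      · exact form_le u (hVb u hu) hF0 (by linarith) (by linarith)
      · rw [Submodule.eq_bot_iff]
        rintro u hu
        rw [Submodule.mem_inf] at hu
        obtain ⟨huV, huK⟩ := hu
        rw [LinearMap.mem_ker] at huK
        have h0 : A u - ((tm - F - ε : ℝ) : ℂ) • u = 0 := by
          have := huK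
          simpa [ContinuousLinearMap.sub_apply, ContinuousLinearMap.smul_apply,
            ContinuousLinearMap.one_apply] using this
        have hAu : A u = ((tm - F - ε : ℝ) : ℂ) • u := by
          rw [sub_eq_zero] at h0; exact h0
        have hwnorm : ‖A u - (tm : ℂ) • u‖ = (F + ε) * ‖u‖ := by
          rw [hAu]
          rw [← sub_smul]
          rw [norm_smul]
          congr 1
          have : ((tm - F - ε : ℝ) : ℂ) - (tm : ℂ) = ((-(F + ε) : ℝ) : ℂ) := by
            push_cast; ring
          rw [this, Complex.norm_real]
          rw [Real.norm_eq_abs, abs_of_nonpos (by linarith)]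
          ring
        have hb := hVb u huV
        rw [hwnorm] at hb
        have hun : ‖u‖ = 0 := by nlinarith [norm_nonneg u]
        exact norm_eq_zero.1 hun
  calc tm - F - ε ≤ nminus A j t := le_csSup hbdd hmem
end

section
/- Let t_1^- < t_2^- < t. If F_L^j(t_i^-) ≤ t − t_i^- for i = 1,2, then t_1^- − F_L^j(t_1^-) ≤ t_2^- − F_L^j(t_2^-) ≤ n_j^-(t), i.e. the lower bound for the j-th spectral point of A to the left of t obtained from t_2^- is at least as good as the one obtained from t_1^-. -/
open scoped InnerProductSpace
open Module

set_option maxHeartbeats 1000000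

variable {H : Type*} [NormedAddCommGroup H] [InnerProductSpace ℂ H] [CompleteSpace H]

/-- The infimum in the definition of `Fapp` is attained. -/
lemma bop_isLeast (B : H →L[ℂ] H) (L : Submodule ℂ H) [FiniteDimensional ℂ L]
    (j : ℕ) (hj1 : 1 ≤ j) (hj : j ≤ Module.finrank ℂ L) :
    ∃ r₀ : ℝ, IsLeast {r : ℝ | 0 ≤ r ∧ ∃ V : Submodule ℂ H, V ≤ L ∧ Module.finrank ℂ V = j ∧
      ∀ u ∈ V, ‖B u‖ ≤ r * ‖u‖} r₀ := by
  classical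
  set n := finrank ℂ L with hn'
  have hn : finrank ℂ L = n := rfl
  have hjn : j ≤ n := hj
  -- the compression `M = P_L B* B |_L`
  set M : L →ₗ[ℂ] L :=
    ((Submodule.orthogonalProjectionOnto L).comp ((ContinuousLinearMap.adjoint B).comp
      (B.comp L.subtypeL))).toLinearMap with hMdef
  have hMinner : ∀ w v : L, (inner ℂ (M w) v : ℂ) = inner ℂ (B (w : H)) (B (v : H)) := by
    intro w v
    show (inner ℂ (Submodule.orthogonalProjectionOnto L ((ContinuousLinearMap.adjoint B) (B (w : H)))) v : ℂ) = _
    rw [Submodule.inner_orthogonalProjectionOnto_eq_of_mem_right, ContinuousLinearMap.adjoint_inner_left]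
  have hMsymm : M.IsSymmetric := by
    intro w v
    rw [hMinner, ← inner_conj_symm (B (w : H)) (B (v : H)), ← hMinner, inner_conj_symm]
  have hquad : ∀ w : L, ((inner ℂ (M w) w : ℂ)).re = ‖B (w : H)‖ ^ 2 := by
    intro w
    rw [hMinner]
    simpa using inner_self_eq_norm_sq (𝕜 := ℂ) (B (w : H))
  set e := hMsymm.eigenvectorBasis hn with he
  set α := hMsymm.eigenvalues hn with hα
  have hα0 : ∀ i, 0 ≤ α i := by
    intro i
    have h1 := hquad (e i)
    have h2 : M (e i) = (α i : ℂ) • e i := hMsymm.apply_eigenvectorBasis hn i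
    rw [h2, inner_smul_left] at h1
    have h3 : ‖e i‖ = 1 := e.orthonormal.1 i
    rw [inner_self_eq_norm_sq_to_K] at h1
    simp only [Complex.mul_re, Complex.conj_re, Complex.conj_im, Complex.ofReal_re,
      Complex.ofReal_im] at h1
    rw [h3] at h1
    simp at h1
    nlinarith [sq_nonneg ‖B (e i : H)‖, h1]
  -- Parseval
  have hpars : ∀ w : L, ‖(w : H)‖ ^ 2 = ∑ i, ‖e.repr w i‖ ^ 2 := by
    intro w
    have h1 : ‖(w : H)‖ = ‖w‖ := rfl
    rw [h1, ← e.repr.norm_map w, EuclideanSpace.norm_eq,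
      Real.sq_sqrt (Finset.sum_nonneg fun i _ => sq_nonneg _)]
  -- expansion of the quadratic form
  have hexp : ∀ w : L, ‖B (w : H)‖ ^ 2 = ∑ i, α i * ‖e.repr w i‖ ^ 2 := by
    intro w
    have hrepr : ∀ i, e.repr (M w) i = (α i : ℂ) * e.repr w i := fun i =>
      hMsymm.eigenvectorBasis_apply_self_apply hn w i
    rw [← hquad, ← e.repr.inner_map_map (M w) w, PiLp.inner_apply, Complex.re_sum]
    refine Finset.sum_congr rfl fun i _ => ?_
    rw [RCLike.inner_apply, hrepr i, map_mul, Complex.conj_ofReal, mul_left_comm,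
      Complex.mul_conj', ← Complex.ofReal_pow, ← Complex.ofReal_mul, Complex.ofReal_re]
  -- vanishing of coefficients for elements of partial spans
  have hvanish : ∀ (I : Set (Fin n)) (w : L), w ∈ Submodule.span ℂ (⇑e '' I) →
      ∀ i ∉ I, e.repr w i = 0 := by
    intro I w hw i hi
    have hw' : w ∈ Submodule.span ℂ (⇑e.toBasis '' I) := by
      rwa [e.coe_toBasis]
    have h2 := (Basis.mem_span_image e.toBasis).1 hw'
    have h3 : e.toBasis.repr w i = 0 := by
      by_contra h
      exact hi (h2 (Finsupp.mem_support_iff.2 h))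
    rwa [e.coe_toBasis_repr_apply] at h3
  -- sort the eigenvalues
  set σ := Tuple.sort α with hσ
  have hmono : Monotone (α ∘ σ) := Tuple.monotone_sort α
  set jm : Fin n := ⟨j - 1, by omega⟩ with hjm
  set c := α (σ jm) with hc
  have hc0 : 0 ≤ c := hα0 _
  set r₀ := Real.sqrt c with hr₀
  -- the minimizing subspace
  set emb1 : Fin j → Fin n := fun i => σ ⟨i, lt_of_lt_of_le i.2 hjn⟩ with hemb1
  have hinj1 : Function.Injective emb1 := by
    intro a b hab
    have h2 := σ.injective hab
    exact Fin.ext (by simpa using congrArg Fin.val h2)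
  set v1 : Fin j → L := fun i => e (emb1 i) with hv1
  set V₀ : Submodule ℂ L := Submodule.span ℂ (Set.range v1) with hV₀
  set V₀' : Submodule ℂ H := V₀.map L.subtype with hV₀'
  have hrange1 : Set.range v1 = ⇑e '' Set.range emb1 := by
    rw [← Set.range_comp]; rfl
  have hli1 : LinearIndependent ℂ v1 := (e.orthonormal.comp emb1 hinj1).linearIndependent
  have hfr1 : finrank ℂ V₀' = j := by
    rw [hV₀', Submodule.finrank_map_subtype_eq, hV₀, finrank_span_eq_card hli1]
    simp
  have hub : ∀ u ∈ V₀', ‖B u‖ ≤ r₀ * ‖u‖ := by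
    rintro u ⟨w, hw, rfl⟩
    show ‖B (w : H)‖ ≤ r₀ * ‖(w : H)‖
    have hw' : w ∈ Submodule.span ℂ (⇑e '' Set.range emb1) := by rwa [← hrange1]
    have hvan := hvanish _ w hw'
    have hkey : ‖B (w : H)‖ ^ 2 ≤ c * ‖(w : H)‖ ^ 2 := by
      rw [hexp, hpars, Finset.mul_sum]
      refine Finset.sum_le_sum fun i _ => ?_
      by_cases hi : i ∈ Set.range emb1
      · obtain ⟨i', rfl⟩ := hi
        have h1 : α (emb1 i') ≤ c := by
          have : (⟨i', lt_of_lt_of_le i'.2 hjn⟩ : Fin n) ≤ jm := by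
            simp only [Fin.le_def, hjm]
            omega
          exact hmono this
        exact mul_le_mul_of_nonneg_right h1 (sq_nonneg _)
      · rw [hvan i hi]
        simp
    have h2 : ‖B (w : H)‖ = Real.sqrt (‖B (w : H)‖ ^ 2) :=
      (Real.sqrt_sq (norm_nonneg _)).symm
    rw [h2]
    calc Real.sqrt (‖B (w : H)‖ ^ 2) ≤ Real.sqrt (c * ‖(w : H)‖ ^ 2) :=
          Real.sqrt_le_sqrt hkey
      _ = r₀ * ‖(w : H)‖ := by
          rw [Real.sqrt_mul hc0, Real.sqrt_sq (norm_nonneg _)]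
  refine ⟨r₀, ⟨⟨Real.sqrt_nonneg _, V₀', Submodule.map_subtype_le _ _, hfr1, hub⟩, ?_⟩⟩
  rintro r' ⟨hr'0, V, hVL, hVj, hVr⟩
  -- the complementary subspace
  set emb2 : Fin (n - (j - 1)) → Fin n := fun i => σ ⟨j - 1 + i, by omega⟩ with hemb2
  have hinj2 : Function.Injective emb2 := by
    intro a b hab
    have := σ.injective hab
    have := congrArg Fin.val this
    simp only at this
    exact Fin.ext (by omega)
  set v2 : Fin (n - (j - 1)) → L := fun i => e (emb2 i) with hv2
  set W : Submodule ℂ L := Submodule.span ℂ (Set.range v2) with hW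
  set W' : Submodule ℂ H := W.map L.subtype with hW'
  have hrange2 : Set.range v2 = ⇑e '' Set.range emb2 := by
    rw [← Set.range_comp]; rfl
  have hli2 : LinearIndependent ℂ v2 := (e.orthonormal.comp emb2 hinj2).linearIndependent
  have hfr2 : finrank ℂ W' = n - (j - 1) := by
    rw [hW', Submodule.finrank_map_subtype_eq, hW, finrank_span_eq_card hli2]
    simp
  haveI hVfd : FiniteDimensional ℂ V := finite_of_finrank_pos (by rw [hVj]; omega)
  haveI hWfd : FiniteDimensional ℂ W' :=
    Submodule.finiteDimensional_of_le (Submodule.map_subtype_le _ _)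
  have hsum := Submodule.finrank_sup_add_finrank_inf_eq V W'
  have hsup_le : finrank ℂ (V ⊔ W' : Submodule ℂ H) ≤ n := by
    rw [hn']
    exact Submodule.finrank_mono (sup_le hVL (Submodule.map_subtype_le _ _))
  have hpos : 0 < finrank ℂ (V ⊓ W' : Submodule ℂ H) := by
    rw [hVj, hfr2] at hsum
    omega
  have hne : (V ⊓ W' : Submodule ℂ H) ≠ ⊥ := by
    intro h
    rw [h, finrank_bot] at hpos
    omega
  obtain ⟨u, hu, hu0⟩ := Submodule.exists_mem_ne_zero_of_ne_bot hne
  obtain ⟨huV, huW⟩ := hu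
  obtain ⟨w, hw, huw⟩ := huW
  have huw' : (w : H) = u := huw
  have hw' : w ∈ Submodule.span ℂ (⇑e '' Set.range emb2) := by rwa [← hrange2]
  have hvan := hvanish _ w hw'
  have hkey : c * ‖(w : H)‖ ^ 2 ≤ ‖B (w : H)‖ ^ 2 := by
    rw [hexp, hpars, Finset.mul_sum]
    refine Finset.sum_le_sum fun i _ => ?_
    by_cases hi : i ∈ Set.range emb2
    · obtain ⟨i', rfl⟩ := hi
      have h1 : c ≤ α (emb2 i') := by
        have : jm ≤ (⟨j - 1 + i', by omega⟩ : Fin n) := by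
          simp only [Fin.le_def, hjm]
          omega
        exact hmono this
      exact mul_le_mul_of_nonneg_right h1 (sq_nonneg _)
    · rw [hvan i hi]
      simp
  have hBu : ‖B (w : H)‖ ≤ r' * ‖(w : H)‖ := by
    rw [huw']; exact hVr _ huV
  have hwpos : 0 < ‖(w : H)‖ := by
    rw [norm_pos_iff, huw']
    exact hu0
  have h1 : c * ‖(w : H)‖ ^ 2 ≤ (r' * ‖(w : H)‖) ^ 2 := by
    calc c * ‖(w : H)‖ ^ 2 ≤ ‖B (w : H)‖ ^ 2 := hkey
      _ ≤ (r' * ‖(w : H)‖) ^ 2 := by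
          apply sq_le_sq' _ hBu
          nlinarith [norm_nonneg (B (w : H))]
  have h2 : c ≤ r' ^ 2 := by nlinarith [mul_pos hwpos hwpos]
  calc r₀ = Real.sqrt c := rfl
    _ ≤ Real.sqrt (r' ^ 2) := Real.sqrt_le_sqrt h2
    _ = r' := Real.sqrt_sq hr'0

/-- The quadratic form estimate. -/
lemma quad_ineq (b u : H) (p q r : ℝ) (hb : ‖b‖ ≤ r * ‖u‖) (hrp : r ≤ p) (hrq : r ≤ q)
    (hr0 : 0 ≤ r) : (inner ℂ (b + (p:ℂ) • u) (b - (q:ℂ) • u) : ℂ).re ≤ 0 := by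
  simp only [inner_add_left, inner_sub_right, inner_smul_left, inner_smul_right, map_add,
    map_sub, Complex.conj_ofReal, Complex.add_re, Complex.sub_re, Complex.mul_re,
    Complex.ofReal_re, Complex.ofReal_im]
  have hbb : (inner ℂ b b : ℂ).re = ‖b‖ ^ 2 := by simpa using inner_self_eq_norm_sq (𝕜 := ℂ) b
  have huu : (inner ℂ u u : ℂ).re = ‖u‖ ^ 2 := by simpa using inner_self_eq_norm_sq (𝕜 := ℂ) u
  have hub : (inner ℂ u b : ℂ).re = (inner ℂ b u : ℂ).re := by
    simpa using inner_re_symm (𝕜 := ℂ) u b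
  rw [hbb, huu, hub]
  ring_nf
  have hu0 : (0:ℝ) ≤ ‖u‖ := norm_nonneg u
  have hb0 : (0:ℝ) ≤ ‖b‖ := norm_nonneg b
  have h2 : |(inner ℂ b u : ℂ).re| ≤ ‖b‖ * ‖u‖ := by
    refine le_trans ?_ (norm_inner_le_norm (𝕜 := ℂ) b u)
    exact Complex.abs_re_le_norm _
  have h3 := abs_le.1 h2
  have hbp : ‖b‖ ≤ p * ‖u‖ := le_trans hb (by nlinarith)
  have hbq : ‖b‖ ≤ q * ‖u‖ := le_trans hb (by nlinarith)
  have hp0 : (0:ℝ) ≤ p := le_trans hr0 hrp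
  have hq0 : (0:ℝ) ≤ q := le_trans hr0 hrq
  rcases le_total p q with hpq | hpq
  · nlinarith [mul_nonneg (sub_nonneg.2 hbp) (add_nonneg (mul_nonneg hq0 hu0) hb0),
      mul_le_mul_of_nonneg_left h3.1 (by linarith : (0:ℝ) ≤ q - p)]
  · nlinarith [mul_nonneg (sub_nonneg.2 hbq) (add_nonneg (mul_nonneg hp0 hu0) hb0),
      mul_le_mul_of_nonneg_left h3.2 (by linarith : (0:ℝ) ≤ p - q)]

/-- `Fapp` is an attained minimum. -/
lemma fapp_isLeast (A : H →L[ℂ] H) (L : Submodule ℂ H) [FiniteDimensional ℂ L]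
    (j : ℕ) (hj1 : 1 ≤ j) (hj : j ≤ Module.finrank ℂ L) (t : ℝ) :
    IsLeast {r : ℝ | 0 ≤ r ∧ ∃ V : Submodule ℂ H, V ≤ L ∧ Module.finrank ℂ V = j ∧
      ∀ u ∈ V, ‖A u - (t : ℂ) • u‖ ≤ r * ‖u‖} (Fapp A L j t) := by
  obtain ⟨r₀, hr₀⟩ := bop_isLeast (A - (t : ℂ) • 1) L j hj1 hj
  have hset : {r : ℝ | 0 ≤ r ∧ ∃ V : Submodule ℂ H, V ≤ L ∧ Module.finrank ℂ V = j ∧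
      ∀ u ∈ V, ‖(A - (t : ℂ) • 1) u‖ ≤ r * ‖u‖}
      = {r : ℝ | 0 ≤ r ∧ ∃ V : Submodule ℂ H, V ≤ L ∧ Module.finrank ℂ V = j ∧
      ∀ u ∈ V, ‖A u - (t : ℂ) • u‖ ≤ r * ‖u‖} := by
    simp only [ContinuousLinearMap.sub_apply, ContinuousLinearMap.smul_apply,
      ContinuousLinearMap.one_apply]
  rw [hset] at hr₀
  rw [Fapp, hr₀.csInf_eq]
  exact hr₀

/-- the lower bound obtained from `t₂⁻` is at least as good as the
one obtained from `t₁⁻ < t₂⁻`. -/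
theorem stmt_4 (A : H →L[ℂ] H) (hA : IsSelfAdjoint A)
    (L : Submodule ℂ H) [FiniteDimensional ℂ L]
    (j : ℕ) (hj1 : 1 ≤ j) (hj : j ≤ Module.finrank ℂ L)
    (t t1 t2 : ℝ) (h12 : t1 < t2) (h2t : t2 < t)
    (hF1 : Fapp A L j t1 ≤ t - t1) (hF2 : Fapp A L j t2 ≤ t - t2) :
    t1 - Fapp A L j t1 ≤ t2 - Fapp A L j t2 ∧
      t2 - Fapp A L j t2 ≤ nminus A j t := by
  obtain ⟨⟨hF1nn, V1, hV1L, hV1j, hV1⟩, hlb1⟩ := fapp_isLeast A L j hj1 hj t1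
  obtain ⟨⟨hF2nn, V2, hV2L, hV2j, hV2⟩, hlb2⟩ := fapp_isLeast A L j hj1 hj t2
  have hmono12 : Fapp A L j t2 ≤ Fapp A L j t1 + (t2 - t1) := by
    apply hlb2
    refine ⟨by linarith, V1, hV1L, hV1j, fun u hu => ?_⟩
    have h1 := hV1 u hu
    have h2 : A u - (t2 : ℂ) • u = (A u - (t1 : ℂ) • u) - ((t2 - t1 : ℝ) : ℂ) • u := by
      push_cast
      rw [sub_smul]
      abel
    rw [h2]
    refine le_trans (norm_sub_le _ _) ?_
    rw [norm_smul]
    have h3 : ‖((t2 - t1 : ℝ) : ℂ)‖ = t2 - t1 := by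
      rw [Complex.norm_real]
      exact abs_of_pos (by linarith)
    rw [h3]
    nlinarith [norm_nonneg u]
  refine ⟨by linarith, ?_⟩
  have hclaim : ∀ s' : ℝ, s' < t2 - Fapp A L j t2 → s' < t ∧ countGeIoc A s' t j := by
    intro s' hs'
    have hst : s' < t := by linarith
    refine ⟨hst, V2, hV2j, fun u hu => ?_, ?_⟩
    · have hB := hV2 u hu
      have e1 : A u - (s' : ℂ) • u = (A u - (t2 : ℂ) • u) + ((t2 - s' : ℝ) : ℂ) • u := by
        push_cast
        rw [sub_smul]
        abel
      have e2 : A u - (t : ℂ) • u = (A u - (t2 : ℂ) • u) - ((t - t2 : ℝ) : ℂ) • u := by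
        push_cast
        rw [sub_smul]
        abel
      rw [e1, e2]
      exact quad_ineq _ u (t2 - s') (t - t2) (Fapp A L j t2) hB (by linarith) (by linarith)
        hF2nn
    · rw [eq_bot_iff]
      rintro u ⟨huV, huK⟩
      have h5 : A u - (s' : ℂ) • u = 0 := by
        have h4 := LinearMap.mem_ker.1 huK
        simpa [ContinuousLinearMap.sub_apply, ContinuousLinearMap.smul_apply,
          ContinuousLinearMap.one_apply] using h4
      have hAu : A u = (s' : ℂ) • u := sub_eq_zero.1 h5
      have hB := hV2 u huV
      have h6 : ‖A u - (t2 : ℂ) • u‖ = (t2 - s') * ‖u‖ := by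
        rw [hAu, ← sub_smul, norm_smul]
        have h7 : ((s' : ℂ) - (t2 : ℂ)) = ((s' - t2 : ℝ) : ℂ) := by push_cast; ring
        rw [h7, Complex.norm_real, Real.norm_eq_abs, abs_of_neg (by nlinarith : s' - t2 < 0)]
        ring
      rw [h6] at hB
      have h8 : ‖u‖ = 0 := by nlinarith [norm_nonneg u]
      simpa [Submodule.mem_bot] using norm_eq_zero.1 h8
  have hbdd : BddAbove {s' : ℝ | s' < t ∧ countGeIoc A s' t j} :=
    ⟨t, fun x hx => le_of_lt hx.1⟩
  rw [nminus]
  by_contra hcon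
  push_neg at hcon
  obtain ⟨s', hs1, hs2⟩ := exists_between hcon
  exact absurd (le_csSup hbdd (hclaim s' hs2)) (not_le.2 hs1)
end

section
/- For any t ∈ ℝ and any finite-dimensional subspace L ⊂ D(A) with dim L = n, the interval [t − F_L^j(t), t + F_L^j(t)] contains at least j points of the spectrum of A counted with multiplicity, i.e. tr 1_{[t−F_L^j(t), t+F_L^j(t)]}(A) ≥ j for all j = 1,…,n. -/
open scoped InnerProductSpace

variable {H : Type*} [NormedAddCommGroup H] [InnerProductSpace ℂ H] [CompleteSpace H]

lemma onb_quadratic {E : Type*} [NormedAddCommGroup E] [InnerProductSpace ℂ E]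
    {n : ℕ} (f : OrthonormalBasis (Fin n) ℂ E) (M : E →ₗ[ℂ] E) (ν : Fin n → ℝ)
    (hMf : ∀ i, M (f i) = (ν i : ℂ) • f i) (w : E) :
    (inner ℂ (M w) w : ℂ).re = ∑ i, ν i * Complex.normSq (inner ℂ (f i) w : ℂ) := by
  have hw := f.sum_repr' w
  have key : (inner ℂ (M w) w : ℂ)
      = ∑ i, (starRingEnd ℂ) ((inner ℂ (f i) w : ℂ) * (ν i : ℂ)) * (inner ℂ (f i) w : ℂ) := by
    conv_lhs => rw [← hw]
    rw [map_sum]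
    simp_rw [map_smul, hMf, smul_smul]
    exact f.orthonormal.inner_sum _ _ _
  rw [key, Complex.re_sum]
  refine Finset.sum_congr rfl fun i _ => ?_
  rw [map_mul, Complex.conj_ofReal]
  have : (starRingEnd ℂ) (inner ℂ (f i) w : ℂ) * (ν i : ℂ) * (inner ℂ (f i) w : ℂ)
      = (ν i : ℂ) * ((inner ℂ (f i) w : ℂ) * (starRingEnd ℂ) (inner ℂ (f i) w : ℂ)) := by ring
  rw [this, Complex.mul_conj]
  simp

lemma onb_normsq {E : Type*} [NormedAddCommGroup E] [InnerProductSpace ℂ E]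
    {n : ℕ} (f : OrthonormalBasis (Fin n) ℂ E) (w : E) :
    ‖w‖ ^ 2 = ∑ i, Complex.normSq (inner ℂ (f i) w : ℂ) := by
  have h1 := onb_quadratic f LinearMap.id (fun _ => 1) (fun i => by simp) w
  have h2 : (inner ℂ w w : ℂ).re = ‖w‖ ^ 2 := by
    rw [← RCLike.re_to_complex]; exact inner_self_eq_norm_sq w
  simp only [LinearMap.id_coe, id_eq, one_mul] at h1
  rw [← h2, h1]

lemma inner_eq_zero_of_mem_span {E : Type*} [NormedAddCommGroup E] [InnerProductSpace ℂ E]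
    {n : ℕ} {f : Fin n → E} (hf : Orthonormal ℂ f)
    {s : Set (Fin n)} {i : Fin n} (hi : i ∉ s) {w : E}
    (hw : w ∈ Submodule.span ℂ (f '' s)) :
    (inner ℂ (f i) w : ℂ) = 0 := by
  have hker : Submodule.span ℂ (f '' s) ≤ LinearMap.ker ((innerSL ℂ (f i)) : E →ₗ[ℂ] ℂ) := by
    rw [Submodule.span_le]
    rintro _ ⟨k, hk, rfl⟩
    have hik : i ≠ k := fun h => hi (h ▸ hk)
    simp only [SetLike.mem_coe, LinearMap.mem_ker, ContinuousLinearMap.coe_coe, innerSL_apply_apply]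
    rw [orthonormal_iff_ite.mp hf i k, if_neg hik]
  simpa using hker hw

/-- `[t - F_L^j(t), t + F_L^j(t)]` contains at least `j` spectral
points of `A`, counting multiplicity: `tr 1_{[t-F_L^j(t),t+F_L^j(t)]}(A) ≥ j`. -/
theorem stmt_5 (A : H →L[ℂ] H) (hA : IsSelfAdjoint A)
    (L : Submodule ℂ H) [FiniteDimensional ℂ L] (t : ℝ) :
    ∀ j : ℕ, 1 ≤ j → j ≤ Module.finrank ℂ L →
      countGeIcc A (t - Fapp A L j t) (t + Fapp A L j t) j := by
  intro j hj1 hjn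
  classical
  set n := Module.finrank ℂ L with hn
  have hn' : Module.finrank ℂ L = n := rfl
  set B : L →L[ℂ] H := A.comp L.subtypeL - (t : ℂ) • L.subtypeL with hBdef
  have hBapp : ∀ u : L, B u = A u - (t : ℂ) • (u : H) := fun u => rfl
  set M : L →L[ℂ] L := (ContinuousLinearMap.adjoint B).comp B with hMdef
  have hMinner : ∀ x y : L, (inner ℂ (M x) y : ℂ) = inner ℂ (B x) (B y) := fun x y =>
    ContinuousLinearMap.adjoint_inner_left B y (B x)
  have hMsym : (↑M : L →ₗ[ℂ] L).IsSymmetric := by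
    intro x y
    show (inner ℂ (M x) y : ℂ) = inner ℂ x (M y)
    rw [hMinner]
    exact (ContinuousLinearMap.adjoint_inner_right B x (B y)).symm
  have hMB : ∀ w : L, (inner ℂ (M w) w : ℂ).re = ‖B w‖ ^ 2 := by
    intro w
    rw [hMinner, ← RCLike.re_to_complex]
    exact inner_self_eq_norm_sq (B w)
  -- eigen decomposition, sorted
  let f0 := hMsym.eigenvectorBasis hn'
  let ν0 := hMsym.eigenvalues hn'
  let σ := Tuple.sort ν0
  let fb : OrthonormalBasis (Fin n) ℂ L := f0.reindex σ.symm
  let ν : Fin n → ℝ := ν0 ∘ σ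
  have hmono : Monotone ν := Tuple.monotone_sort ν0
  have hfb : ∀ i, fb i = f0 (σ i) := fun i => by
    simp [fb, OrthonormalBasis.reindex_apply]
  have hMf : ∀ i, M (fb i) = ((ν i : ℝ) : ℂ) • fb i := by
    intro i
    have h := hMsym.apply_eigenvectorBasis hn' (σ i)
    rw [hfb i]
    exact h
  have hquad : ∀ w : L, (inner ℂ (M w) w : ℂ).re
      = ∑ i, ν i * Complex.normSq (inner ℂ (fb i) w : ℂ) :=
    onb_quadratic fb (↑M) ν hMf
  have hνnn : ∀ i, 0 ≤ ν i := by
    intro i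
    have h1 := hMB (fb i)
    rw [hMf i, inner_smul_left, Complex.conj_ofReal] at h1
    have hnorm : (inner ℂ (fb i) (fb i) : ℂ) = 1 := by
      have := orthonormal_iff_ite.mp fb.orthonormal i i
      simpa using this
    rw [hnorm, mul_one, Complex.ofReal_re] at h1
    rw [h1]; positivity
  have hjn' : j - 1 < n := by omega
  set μ := ν ⟨j - 1, hjn'⟩ with hμdef
  have hμnn : 0 ≤ μ := hνnn _
  -- spans of initial segments
  have hspan : ∀ m : ℕ, m ≤ n →
      Module.finrank ℂ ↥(Submodule.span ℂ (fb '' {i : Fin n | (i : ℕ) < m})) = m := by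
    intro m hm
    have himg : fb '' {i : Fin n | (i : ℕ) < m}
        = Set.range (fun k : Fin m => fb (Fin.castLE hm k)) := by
      ext x
      constructor
      · rintro ⟨i, hi, rfl⟩
        exact ⟨⟨i.1, hi⟩, congrArg fb (Fin.ext rfl)⟩
      · rintro ⟨k, rfl⟩
        exact ⟨Fin.castLE hm k, k.isLt, rfl⟩
    have hli : LinearIndependent ℂ (fun k : Fin m => fb (Fin.castLE hm k)) :=
      (fb.orthonormal.comp _ ((Fin.strictMono_castLE hm).injective)).linearIndependent
    rw [himg]
    exact (finrank_span_eq_card hli).trans (Fintype.card_fin m)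
  set V₀ : Submodule ℂ L := Submodule.span ℂ (fb '' {i : Fin n | (i : ℕ) < j}) with hV₀def
  have hV₀rank : Module.finrank ℂ V₀ = j := hspan j hjn
  -- upper bound on V₀
  have hupper : ∀ w : L, w ∈ V₀ → ‖B w‖ ^ 2 ≤ μ * ‖w‖ ^ 2 := by
    intro w hw
    rw [← hMB w, hquad w, onb_normsq fb w, Finset.mul_sum]
    refine Finset.sum_le_sum fun i _ => ?_
    by_cases hij : (i : ℕ) < j
    · have hle : i ≤ (⟨j - 1, hjn'⟩ : Fin n) := by
        rw [Fin.le_def]; simp only []; omega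
      exact mul_le_mul_of_nonneg_right (hmono hle) (Complex.normSq_nonneg _)
    · rw [inner_eq_zero_of_mem_span fb.orthonormal hij hw]
      simp
  -- the set S
  set S := {r : ℝ | 0 ≤ r ∧ ∃ V : Submodule ℂ H, V ≤ L ∧ Module.finrank ℂ V = j ∧
    ∀ u ∈ V, ‖A u - (t : ℂ) • u‖ ≤ r * ‖u‖} with hSdef
  have hFS : Fapp A L j t = sInf S := rfl
  have hV₀mapRank : Module.finrank ℂ ↥(V₀.map L.subtype) = j := by
    rw [Submodule.finrank_map_subtype_eq]; exact hV₀rank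
  have hSne : S.Nonempty := by
    refine ⟨‖B‖, norm_nonneg B, V₀.map L.subtype, Submodule.map_subtype_le L V₀,
      hV₀mapRank, ?_⟩
    rintro u ⟨w, hw, rfl⟩
    exact B.le_opNorm w
  -- lower bound on S
  have hlow : ∀ r ∈ S, μ ≤ r ^ 2 := by
    rintro r ⟨hr0, V', hV'L, hV'rank, hV'bound⟩
    set W : Submodule ℂ L := Submodule.span ℂ (fb '' {i : Fin n | (i : ℕ) < j - 1}) with hWdef
    have hWrank : Module.finrank ℂ W = j - 1 := hspan (j - 1) (by omega)
    set V₁ : Submodule ℂ L := V'.comap L.subtype with hV₁def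
    have hV₁rank : Module.finrank ℂ V₁ = j := by
      have h1 : V₁.map L.subtype = V' := by
        rw [hV₁def, Submodule.map_comap_subtype]
        exact inf_eq_right.mpr hV'L
      have h2 := Submodule.finrank_map_subtype_eq L V₁
      rw [h1] at h2
      omega
    have hdim : 0 < Module.finrank ℂ ↥(V₁ ⊓ Wᗮ) := by
      have h1 := Submodule.finrank_sup_add_finrank_inf_eq V₁ Wᗮ
      have h2 : Module.finrank ℂ ↥(V₁ ⊔ Wᗮ) ≤ n := Submodule.finrank_le _
      have h3 := Submodule.finrank_add_finrank_orthogonal W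
      omega
    have : Nontrivial ↥(V₁ ⊓ Wᗮ) := Module.finrank_pos_iff.mp hdim
    obtain ⟨w, hw0⟩ := exists_ne (0 : ↥(V₁ ⊓ Wᗮ))
    set w₀ : L := ↑w with hw₀def
    have hw₀mem : w₀ ∈ V₁ ⊓ Wᗮ := w.2
    have hw₀ne : w₀ ≠ 0 := fun h => hw0 (Subtype.ext h)
    have hquadw : μ * ‖w₀‖ ^ 2 ≤ (inner ℂ (M w₀) w₀ : ℂ).re := by
      rw [hquad w₀, onb_normsq fb w₀, Finset.mul_sum]
      refine Finset.sum_le_sum fun i _ => ?_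
      by_cases hij : (i : ℕ) < j - 1
      · have hmem : fb i ∈ W := Submodule.subset_span ⟨i, hij, rfl⟩
        rw [(Submodule.mem_orthogonal _ _).mp hw₀mem.2 (fb i) hmem]
        simp
      · have hle : (⟨j - 1, hjn'⟩ : Fin n) ≤ i := by
          rw [Fin.le_def]; simp only []; omega
        exact mul_le_mul_of_nonneg_right (hmono hle) (Complex.normSq_nonneg _)
    have hBw : ‖B w₀‖ ≤ r * ‖w₀‖ := by
      have h := hV'bound ↑w₀ hw₀mem.1
      rw [← hBapp w₀] at h
      simpa using h
    have hchain : μ * ‖w₀‖ ^ 2 ≤ r ^ 2 * ‖w₀‖ ^ 2 := by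
      calc μ * ‖w₀‖ ^ 2 ≤ (inner ℂ (M w₀) w₀ : ℂ).re := hquadw
        _ = ‖B w₀‖ ^ 2 := hMB w₀
        _ ≤ (r * ‖w₀‖) ^ 2 := by
            exact pow_le_pow_left₀ (norm_nonneg _) hBw 2
        _ = r ^ 2 * ‖w₀‖ ^ 2 := by ring
    have hwpos : 0 < ‖w₀‖ ^ 2 := pow_pos (norm_pos_iff.mpr hw₀ne) 2
    exact (mul_le_mul_iff_of_pos_right hwpos).mp hchain
  -- Fapp bounds
  have hF0 : Real.sqrt μ ≤ Fapp A L j t := by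
    rw [hFS]
    refine le_csInf hSne fun r hr => ?_
    have h1 : Real.sqrt μ ≤ Real.sqrt (r ^ 2) := Real.sqrt_le_sqrt (hlow r hr)
    rwa [Real.sqrt_sq hr.1] at h1
  have hμF : μ ≤ (Fapp A L j t) ^ 2 := by
    calc μ = Real.sqrt μ ^ 2 := (Real.sq_sqrt hμnn).symm
      _ ≤ (Fapp A L j t) ^ 2 := pow_le_pow_left₀ (Real.sqrt_nonneg μ) hF0 2
  -- conclusion
  set F := Fapp A L j t with hFdef
  refine ⟨V₀.map L.subtype, hV₀mapRank, ?_⟩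
  rintro u ⟨w, hw, rfl⟩
  have hxnorm : ‖B w‖ ^ 2 ≤ F ^ 2 * ‖(w : H)‖ ^ 2 := by
    calc ‖B w‖ ^ 2 ≤ μ * ‖w‖ ^ 2 := hupper w hw
      _ ≤ F ^ 2 * ‖w‖ ^ 2 := mul_le_mul_of_nonneg_right hμF (sq_nonneg _)
      _ = F ^ 2 * ‖(w : H)‖ ^ 2 := rfl
  have hsub1 : A ↑w - ((t - F : ℝ) : ℂ) • (w : H) = B w + (F : ℂ) • (w : H) := by
    rw [hBapp w, Complex.ofReal_sub, sub_smul]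
    abel
  have hsub2 : A ↑w - ((t + F : ℝ) : ℂ) • (w : H) = B w - (F : ℂ) • (w : H) := by
    rw [hBapp w, Complex.ofReal_add, add_smul]
    abel
  show (inner ℂ (A ↑w - ((t - F : ℝ) : ℂ) • (w : H)) (A ↑w - ((t + F : ℝ) : ℂ) • (w : H)) : ℂ).re ≤ 0
  rw [hsub1, hsub2]
  set x : H := B w with hxdef
  set y : H := (w : H) with hydef
  have hexp : (inner ℂ (x + (F : ℂ) • y) (x - (F : ℂ) • y) : ℂ)
      = inner ℂ x x - (F : ℂ) * inner ℂ x y + (F : ℂ) * inner ℂ y x - (F : ℂ) ^ 2 * inner ℂ y y := by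
    simp only [inner_add_left, inner_sub_right, inner_smul_left, inner_smul_right,
      Complex.conj_ofReal]
    ring
  rw [hexp]
  have hyx : (inner ℂ y x : ℂ).re = (inner ℂ x y : ℂ).re := by
    rw [← inner_conj_symm x y]; exact Complex.conj_re _
  have hxx : (inner ℂ x x : ℂ).re = ‖x‖ ^ 2 := by
    rw [← RCLike.re_to_complex]; exact inner_self_eq_norm_sq x
  have hyy : (inner ℂ y y : ℂ).re = ‖y‖ ^ 2 := by
    rw [← RCLike.re_to_complex]; exact inner_self_eq_norm_sq y
  have hF2 : ((F : ℂ) ^ 2) = ((F ^ 2 : ℝ) : ℂ) := by push_cast; ring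
  simp only [Complex.sub_re, Complex.add_re, Complex.re_ofReal_mul, hF2]
  rw [hyx, hxx, hyy]
  have : ‖x‖ ^ 2 ≤ F ^ 2 * ‖y‖ ^ 2 := hxnorm
  linarith
end

section
/- The smallest eigenvalue τ_1^-(t) of the problem τ q_t(u,v) = l_t(u,v) on L is negative if and only if there exists s < t with F_L^1(s) = t − s; in that case s = t + 1/(2τ_1^-(t)) and F_L^1(s) = −1/(2τ_1^-(t)) = ‖(A−s)u‖/‖u‖ where u is the eigenvector corresponding to τ_1^-(t). -/
open scoped InnerProductSpace

variable {H : Type*} [NormedAddCommGroup H] [InnerProductSpace ℂ H] [CompleteSpace H]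

set_option linter.unusedSectionVars false
set_option maxHeartbeats 1000000


lemma le_of_sq_le' (a b : ℝ) (hb : 0 ≤ b) (h : a^2 ≤ b^2) : a ≤ b := by nlinarith

lemma eq_of_sq_eq' (a b : ℝ) (ha : 0 ≤ a) (hb : 0 ≤ b) (h : a^2 = b^2) : a = b := by nlinarith

lemma expand' (A : H →L[ℂ] H) (s t : ℝ) (u : H) :
    ‖A u - (s:ℂ)•u‖^2 = ‖A u - (t:ℂ)•u‖^2
      + 2*(t-s)*(inner ℂ (A u - (t:ℂ)•u) u : ℂ).re + (t-s)^2*‖u‖^2 := by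
  have h1 : A u - (s:ℂ)•u = (A u - (t:ℂ)•u) + ((t-s:ℝ):ℂ)•u := by
    rw [Complex.ofReal_sub, sub_smul]; abel
  rw [h1]
  have h2 := norm_add_sq (𝕜:=ℂ) (A u - (t:ℂ)•u) (((t-s:ℝ):ℂ)•u)
  simp only [inner_smul_right, RCLike.re_to_complex] at h2
  rw [h2, norm_smul, Complex.norm_real]
  simp only [Complex.mul_re, Complex.ofReal_re, Complex.ofReal_im, zero_mul, sub_zero, mul_pow,
    Real.norm_eq_abs, sq_abs]
  ring

lemma sphereL (L : Submodule ℂ H) (w : H) (hw : w ∈ L) (hwne : w ≠ 0) :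
    ∃ x : L, ‖x‖ = 1 ∧ (x : H) = ((‖w‖⁻¹ : ℝ) : ℂ) • w := by
  refine ⟨((‖w‖⁻¹ : ℝ) : ℂ) • ⟨w, hw⟩, ?_, rfl⟩
  have : ‖(⟨w, hw⟩ : L)‖ = ‖w‖ := rfl
  rw [norm_smul, this, Complex.norm_real, Real.norm_eq_abs, abs_inv, abs_norm]
  exact inv_mul_cancel₀ (norm_ne_zero_iff.mpr hwne)

lemma minOnSphere (L : Submodule ℂ H) [FiniteDimensional ℂ L]
    (f : H → ℝ) (hf : ContinuousOn (fun x : L => f ↑x) (Metric.sphere (0:L) 1))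
    (w : H) (hw : w ∈ L) (hwne : w ≠ 0) :
    ∃ x : L, ‖x‖ = 1 ∧ ∀ y : L, ‖y‖ = 1 → f ↑x ≤ f ↑y := by
  obtain ⟨x1, hx1, _⟩ := sphereL L w hw hwne
  have hne : (Metric.sphere (0:L) 1).Nonempty := ⟨x1, by simpa [mem_sphere_zero_iff_norm] using hx1⟩
  have hc : IsCompact (Metric.sphere (0:L) 1) := isCompact_sphere 0 1
  obtain ⟨x, hx, hmin⟩ := hc.exists_isMinOn hne hf
  exact ⟨x, by simpa [mem_sphere_zero_iff_norm] using hx,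
    fun y hy => hmin (by simpa [mem_sphere_zero_iff_norm] using hy)⟩

lemma Bsmul (A : H →L[ℂ] H) (t : ℝ) (c : ℂ) (v : H) :
    A (c•v) - (t:ℂ)•(c•v) = c • (A v - (t:ℂ)•v) := by
  rw [map_smul, smul_sub, smul_comm]

lemma Qpos' (A : H →L[ℂ] H) (L : Submodule ℂ H) (t : ℝ)
    (hker : L ⊓ LinearMap.ker ((A - (t : ℂ) • (1 : H →L[ℂ] H) : H →L[ℂ] H) : H →ₗ[ℂ] H) = ⊥)
    (u : H) (huL : u ∈ L) (hu : u ≠ 0) : 0 < ‖A u - (t:ℂ)•u‖ := by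
  rcases eq_or_lt_of_le (norm_nonneg (A u - (t:ℂ)•u)) with h | h
  · exfalso
    have hBu : A u - (t:ℂ)•u = 0 := by rw [← norm_eq_zero]; exact h.symm
    have hk : u ∈ LinearMap.ker ((A - (t : ℂ) • (1 : H →L[ℂ] H) : H →L[ℂ] H) : H →ₗ[ℂ] H) := by
      simp only [LinearMap.mem_ker]
      show (A - (t : ℂ) • (1 : H →L[ℂ] H)) u = 0
      simpa [ContinuousLinearMap.sub_apply, ContinuousLinearMap.smul_apply,
        ContinuousLinearMap.one_apply] using hBu
    have : u ∈ L ⊓ LinearMap.ker ((A - (t : ℂ) • (1 : H →L[ℂ] H) : H →L[ℂ] H) : H →ₗ[ℂ] H) := ⟨huL, hk⟩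
    rw [hker] at this
    exact hu (by simpa using this)
  · exact h

lemma coercive (A : H →L[ℂ] H) (L : Submodule ℂ H) [FiniteDimensional ℂ L] (t : ℝ)
    (hker : L ⊓ LinearMap.ker ((A - (t : ℂ) • (1 : H →L[ℂ] H) : H →L[ℂ] H) : H →ₗ[ℂ] H) = ⊥)
    (w : H) (hw : w ∈ L) (hwne : w ≠ 0) :
    ∃ c : ℝ, 0 < c ∧ ∀ u ∈ L, c * ‖u‖ ≤ ‖A u - (t:ℂ)•u‖ := by
  have hcont : ContinuousOn (fun x : L => ‖A ↑x - (t:ℂ)•(↑x:H)‖) (Metric.sphere (0:L) 1) := by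
    apply Continuous.continuousOn
    have : Continuous (fun u : H => ‖A u - (t:ℂ)•u‖) := by fun_prop
    exact this.comp continuous_subtype_val
  obtain ⟨x0, hx0, hmin⟩ := minOnSphere L (fun u : H => ‖A u - (t:ℂ)•u‖) hcont w hw hwne
  have hx0ne : (x0 : H) ≠ 0 := by
    intro h
    apply one_ne_zero (α := ℝ)
    rw [← hx0]
    show ‖(x0 : H)‖ = 0
    rw [h, norm_zero]
  refine ⟨‖A ↑x0 - (t:ℂ)•(↑x0:H)‖, Qpos' A L t hker _ x0.2 hx0ne, fun u hu => ?_⟩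
  rcases eq_or_ne u 0 with rfl | hune
  · simp
  · obtain ⟨x, hx, hxval⟩ := sphereL L u hu hune
    have h1 := hmin x hx
    rw [hxval, Bsmul, norm_smul, Complex.norm_real, Real.norm_eq_abs, abs_inv, abs_norm] at h1
    have hnu : (0:ℝ) < ‖u‖ := norm_pos_iff.mpr hune
    have hinv : ‖u‖⁻¹ * ‖u‖ = 1 := inv_mul_cancel₀ (ne_of_gt hnu)
    nlinarith [mul_le_mul_of_nonneg_right h1 (le_of_lt hnu), norm_nonneg (A u - (t:ℂ)•u)]


lemma quadz (a b : ℝ) (h : ∀ ε : ℝ, 0 ≤ a * ε^2 + b * ε) : b = 0 := by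
  have key : ∀ δ : ℝ, 0 < δ → 0 ≤ b^2*(a*δ - 1) := by
    intro δ hδ
    have := h (-b*δ); nlinarith
  by_contra hb
  have hb2 : 0 < b^2 := by positivity
  have hδ : 0 < (1:ℝ)/(2*(|a|+1)) := by positivity
  have h4 := key _ hδ
  have h5 : a * ((1:ℝ)/(2*(|a|+1))) < 1 := by
    rw [mul_one_div, div_lt_one (by positivity)]
    nlinarith [le_abs_self a, abs_nonneg a]
  nlinarith

lemma herm' (A : H →L[ℂ] H) (hA : IsSelfAdjoint A) (t : ℝ) (u v : H) :
    (inner ℂ (A u - (t:ℂ)•u) v : ℂ) = inner ℂ u (A v - (t:ℂ)•v) := by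
  have hs : (inner ℂ (A u) v : ℂ) = inner ℂ u (A v) := hA.isSymmetric u v
  rw [inner_sub_left, inner_sub_right, inner_smul_left, inner_smul_right, hs]
  norm_num


lemma Badd (A : H →L[ℂ] H) (t : ℝ) (u v : H) :
    A (u+v) - (t:ℂ)•(u+v) = (A u - (t:ℂ)•u) + (A v - (t:ℂ)•v) := by
  rw [map_add, smul_add]; abel


lemma Qexp (A : H →L[ℂ] H) (t : ℝ) (u v : H) (ε : ℝ) :
    ‖A (u+(ε:ℂ)•v) - (t:ℂ)•(u+(ε:ℂ)•v)‖^2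
      = ‖A u - (t:ℂ)•u‖^2 + 2*((inner ℂ (A u - (t:ℂ)•u) (A v - (t:ℂ)•v) : ℂ).re)*ε
        + (‖A v - (t:ℂ)•v‖^2)*ε^2 := by
  rw [Badd, Bsmul]
  have h2 := norm_add_sq (𝕜:=ℂ) (A u - (t:ℂ)•u) ((ε:ℂ) • (A v - (t:ℂ)•v))
  simp only [inner_smul_right, RCLike.re_to_complex] at h2
  rw [h2, norm_smul, Complex.norm_real]
  simp only [Complex.mul_re, Complex.ofReal_re, Complex.ofReal_im, zero_mul, sub_zero, mul_pow,
    Real.norm_eq_abs, sq_abs]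
  ring


lemma Lexp (A : H →L[ℂ] H) (hA : IsSelfAdjoint A) (t : ℝ) (u v : H) (ε : ℝ) :
    (inner ℂ (A (u+(ε:ℂ)•v) - (t:ℂ)•(u+(ε:ℂ)•v)) (u+(ε:ℂ)•v) : ℂ).re
      = (inner ℂ (A u - (t:ℂ)•u) u : ℂ).re + 2*((inner ℂ (A u - (t:ℂ)•u) v : ℂ).re)*ε
        + ((inner ℂ (A v - (t:ℂ)•v) v : ℂ).re)*ε^2 := by
  rw [Badd, Bsmul]
  rw [inner_add_left, inner_add_right, inner_add_right, inner_smul_left, inner_smul_right,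
    inner_smul_right, inner_smul_left]
  have hvu : (inner ℂ (A v - (t:ℂ)•v) u : ℂ) = starRingEnd ℂ (inner ℂ (A u - (t:ℂ)•u) v : ℂ) := by
    rw [herm' A hA t u v, ← inner_conj_symm]
  rw [hvu]
  simp only [Complex.add_re, Complex.mul_re, Complex.conj_re, Complex.conj_im,
    Complex.ofReal_re, Complex.ofReal_im, Complex.add_im, Complex.mul_im]
  ring


lemma variational (A : H →L[ℂ] H) (hA : IsSelfAdjoint A) (L : Submodule ℂ H)
    [FiniteDimensional ℂ L] (t : ℝ)
    (hker : L ⊓ LinearMap.ker ((A - (t : ℂ) • (1 : H →L[ℂ] H) : H →L[ℂ] H) : H →ₗ[ℂ] H) = ⊥)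
    (τ1 : ℝ) (u1 : H) (hu1L : u1 ∈ L) (hu1 : u1 ≠ 0)
    (hmin : ∀ (τ : ℝ) (u : H), u ∈ L → u ≠ 0 →
      (∀ v ∈ L, (τ : ℂ) * (inner ℂ (A u - (t : ℂ) • u) (A v - (t : ℂ) • v) : ℂ)
        = (inner ℂ (A u - (t : ℂ) • u) v : ℂ)) → τ1 ≤ τ) :
    ∀ u ∈ L, τ1 * ‖A u - (t:ℂ)•u‖^2 ≤ (inner ℂ (A u - (t:ℂ)•u) u : ℂ).re := by
  set f : H → ℝ := fun u => (inner ℂ (A u - (t:ℂ)•u) u : ℂ).re / ‖A u - (t:ℂ)•u‖^2 with hf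
  have hcontN : Continuous (fun u : H => ‖A u - (t:ℂ)•u‖^2) := by fun_prop
  have hcontL : Continuous (fun u : H => (inner ℂ (A u - (t:ℂ)•u) u : ℂ).re) := by
    have h1 : Continuous (fun u : H => A u - (t:ℂ)•u) := by fun_prop
    exact Complex.continuous_re.comp (h1.inner continuous_id)
  have hcont : ContinuousOn (fun x : L => f ↑x) (Metric.sphere (0:L) 1) := by
    apply ContinuousOn.div
    · exact (hcontL.comp continuous_subtype_val).continuousOn
    · exact (hcontN.comp continuous_subtype_val).continuousOn
    · intro x hx
      have hxne : (x : H) ≠ 0 := by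
        intro h
        rw [mem_sphere_zero_iff_norm] at hx
        apply one_ne_zero (α := ℝ)
        rw [← hx]; show ‖(x : H)‖ = 0; rw [h, norm_zero]
      exact ne_of_gt (pow_pos (Qpos' A L t hker _ x.2 hxne) 2)
  obtain ⟨xs, hxs, hminf⟩ := minOnSphere L f hcont u1 hu1L hu1
  set m : ℝ := f ↑xs with hm
  have hxsne : (xs : H) ≠ 0 := by
    intro h
    apply one_ne_zero (α := ℝ)
    rw [← hxs]; show ‖(xs : H)‖ = 0; rw [h, norm_zero]
  -- scale invariance: m * Q u ≤ Lf u for all u in L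
  have hscale : ∀ u ∈ L, m * ‖A u - (t:ℂ)•u‖^2 ≤ (inner ℂ (A u - (t:ℂ)•u) u : ℂ).re := by
    intro u hu
    rcases eq_or_ne u 0 with rfl | hune
    · simp
    · obtain ⟨x, hx, hxval⟩ := sphereL L u hu hune
      have h1 := hminf x hx
      have hQ : (0:ℝ) < ‖A u - (t:ℂ)•u‖^2 := pow_pos (Qpos' A L t hker u hu hune) 2
      have hfx : f ↑x = f u := by
        rw [hf]
        simp only [hxval, Bsmul, inner_smul_left, inner_smul_right, norm_smul]
        rw [Complex.conj_ofReal]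
        have hnu : (0:ℝ) < ‖u‖ := norm_pos_iff.mpr hune
        have hc2 : ‖((‖u‖⁻¹ : ℝ) : ℂ)‖ = ‖u‖⁻¹ := by
          rw [Complex.norm_real, Real.norm_eq_abs, abs_inv, abs_norm]
        rw [hc2]
        have : ((((‖u‖⁻¹:ℝ):ℂ)) * ((((‖u‖⁻¹:ℝ):ℂ)) * (inner ℂ (A u - (t:ℂ)•u) u : ℂ))).re
            = ‖u‖⁻¹ * ‖u‖⁻¹ * (inner ℂ (A u - (t:ℂ)•u) u : ℂ).re := by
          simp [Complex.mul_re, Complex.ofReal_re, Complex.ofReal_im]; ring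
        rw [this, mul_pow]
        have hden : ((‖u‖⁻¹:ℝ)^2 * ‖A u - (t:ℂ)•u‖^2) ≠ 0 := by positivity
        rw [div_eq_div_iff hden (ne_of_gt hQ)]
        ring
      rw [hfx, hf] at h1
      have h2 := mul_le_mul_of_nonneg_right h1 (le_of_lt hQ)
      simp only at h2
      rwa [div_mul_cancel₀ _ (ne_of_gt hQ)] at h2
  have hQxs : (0:ℝ) < ‖A ↑xs - (t:ℂ)•(↑xs:H)‖^2 := pow_pos (Qpos' A L t hker _ xs.2 hxsne) 2
  have hstar : (inner ℂ (A ↑xs - (t:ℂ)•(↑xs:H)) (↑xs:H) : ℂ).re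
      = m * ‖A ↑xs - (t:ℂ)•(↑xs:H)‖^2 := by
    rw [hm, hf]
    simp only []
    rw [div_mul_cancel₀ _ (ne_of_gt hQxs)]
  have key : ∀ v ∈ L, (inner ℂ (A ↑xs - (t:ℂ)•(↑xs:H)) v : ℂ).re
      = m * (inner ℂ (A ↑xs - (t:ℂ)•(↑xs:H)) (A v - (t:ℂ)•v) : ℂ).re := by
    intro v hv
    have hb := quadz ((inner ℂ (A v - (t:ℂ)•v) v : ℂ).re - m * ‖A v - (t:ℂ)•v‖^2)
      (2*((inner ℂ (A ↑xs - (t:ℂ)•(↑xs:H)) v : ℂ).re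
        - m * (inner ℂ (A ↑xs - (t:ℂ)•(↑xs:H)) (A v - (t:ℂ)•v) : ℂ).re)) ?_
    · linarith [hb]
    · intro ε
      have hmem : ((↑xs:H) + (ε:ℂ)•v : H) ∈ L := L.add_mem xs.2 (L.smul_mem _ hv)
      have h3 := hscale _ hmem
      rw [Qexp A t (↑xs) v ε, Lexp A hA t (↑xs) v ε] at h3
      nlinarith [h3, hstar]
  have heigen : ∀ v ∈ L, (m:ℂ) * (inner ℂ (A ↑xs - (t:ℂ)•(↑xs:H)) (A v - (t:ℂ)•v) : ℂ)
      = (inner ℂ (A ↑xs - (t:ℂ)•(↑xs:H)) v : ℂ) := by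
    intro v hv
    have h1 := key v hv
    have h2 := key (Complex.I • v) (L.smul_mem _ hv)
    rw [Bsmul, inner_smul_right, inner_smul_right] at h2
    apply Complex.ext
    · simp only [Complex.mul_re, Complex.ofReal_re, Complex.ofReal_im]
      simp only [zero_mul, sub_zero]
      linarith [h1]
    · simp only [Complex.mul_re, Complex.I_re, Complex.I_im, zero_mul, one_mul,
        zero_sub] at h2
      simp only [Complex.mul_im, Complex.ofReal_re, Complex.ofReal_im, zero_mul, add_zero]
      linarith [h2]
  have hτm : τ1 ≤ m := hmin m ↑xs xs.2 hxsne heigen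
  intro u hu
  calc τ1 * ‖A u - (t:ℂ)•u‖^2 ≤ m * ‖A u - (t:ℂ)•u‖^2 :=
        mul_le_mul_of_nonneg_right hτm (sq_nonneg _)
    _ ≤ _ := hscale u hu

lemma Fapp_mem (A : H →L[ℂ] H) (L : Submodule ℂ H) (s : ℝ) (u : H) (huL : u ∈ L)
    (hu : u ≠ 0) :
    (‖A u - (s:ℂ)•u‖ / ‖u‖) ∈ {r : ℝ | 0 ≤ r ∧ ∃ V : Submodule ℂ H, V ≤ L ∧
      Module.finrank ℂ V = 1 ∧ ∀ w ∈ V, ‖A w - (s : ℂ) • w‖ ≤ r * ‖w‖} := by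
  refine ⟨by positivity, Submodule.span ℂ {u}, ?_, finrank_span_singleton hu, ?_⟩
  · rw [Submodule.span_singleton_le_iff_mem]; exact huL
  · intro w hw
    obtain ⟨c, rfl⟩ := Submodule.mem_span_singleton.mp hw
    rw [Bsmul A s c u, norm_smul, norm_smul]
    have hnu : ‖u‖ ≠ 0 := norm_ne_zero_iff.mpr hu
    rw [div_mul_eq_mul_div, mul_comm, mul_div_assoc, mul_div_assoc, div_self hnu, mul_one]

lemma Fapp_bddBelow (A : H →L[ℂ] H) (L : Submodule ℂ H) (s : ℝ) :
    BddBelow {r : ℝ | 0 ≤ r ∧ ∃ V : Submodule ℂ H, V ≤ L ∧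
      Module.finrank ℂ V = 1 ∧ ∀ w ∈ V, ‖A w - (s : ℂ) • w‖ ≤ r * ‖w‖} :=
  ⟨0, fun _ hr => hr.1⟩

lemma Fapp_le (A : H →L[ℂ] H) (L : Submodule ℂ H) (s : ℝ) (u : H) (huL : u ∈ L)
    (hu : u ≠ 0) : Fapp A L 1 s ≤ ‖A u - (s:ℂ)•u‖ / ‖u‖ :=
  csInf_le (Fapp_bddBelow A L s) (Fapp_mem A L s u huL hu)

lemma Fapp_lb (A : H →L[ℂ] H) (L : Submodule ℂ H) (s : ℝ) (c : ℝ) (hc : 0 ≤ c)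
    (w : H) (hwL : w ∈ L) (hw : w ≠ 0)
    (h : ∀ u ∈ L, c * ‖u‖ ≤ ‖A u - (s:ℂ)•u‖) : c ≤ Fapp A L 1 s := by
  apply le_csInf ⟨_, Fapp_mem A L s w hwL hw⟩
  rintro r ⟨hr0, V, hVL, hrk, hb⟩
  have hVne : V ≠ ⊥ := by
    intro hbot
    rw [hbot] at hrk
    simp at hrk
  obtain ⟨u, huV, hune⟩ := Submodule.exists_mem_ne_zero_of_ne_bot hVne
  have h1 := h u (hVL huV)
  have h2 := hb u huV
  have hnu : (0:ℝ) < ‖u‖ := norm_pos_iff.mpr hune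
  exact le_of_mul_le_mul_right (h1.trans h2) hnu

lemma Fapp_approx (A : H →L[ℂ] H) (L : Submodule ℂ H) (s : ℝ)
    (w : H) (hwL : w ∈ L) (hw : w ≠ 0) (ε : ℝ) (hε : 0 < ε) :
    ∃ u, u ∈ L ∧ u ≠ 0 ∧ ‖A u - (s:ℂ)•u‖ ≤ (Fapp A L 1 s + ε) * ‖u‖ := by
  have hlt : Fapp A L 1 s < Fapp A L 1 s + ε := by linarith
  obtain ⟨r, hrS, hrlt⟩ := exists_lt_of_csInf_lt ⟨_, Fapp_mem A L s w hwL hw⟩ hlt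
  obtain ⟨hr0, V, hVL, hrk, hb⟩ := hrS
  have hVne : V ≠ ⊥ := by
    intro hbot
    rw [hbot] at hrk
    simp at hrk
  obtain ⟨u, huV, hune⟩ := Submodule.exists_mem_ne_zero_of_ne_bot hVne
  refine ⟨u, hVL huV, hune, (hb u huV).trans ?_⟩
  exact mul_le_mul_of_nonneg_right (le_of_lt hrlt) (norm_nonneg u)


/-- the smallest eigenvalue `τ₁⁻(t)` of the weak problem
`τ q_t(u,v) = l_t(u,v)` on `L` is negative iff there is `s < t` with
`F_L^1(s) = t - s`; in that case `s = t + 1/(2τ₁⁻(t))` and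
`F_L^1(s) = -1/(2τ₁⁻(t)) = ‖(A-s)u₁‖/‖u₁‖` for the corresponding
eigenvector `u₁`. -/
theorem stmt_10 (A : H →L[ℂ] H) (hA : IsSelfAdjoint A)
    (L : Submodule ℂ H) [FiniteDimensional ℂ L] (t : ℝ)
    (hker : L ⊓ LinearMap.ker ((A - (t : ℂ) • (1 : H →L[ℂ] H) : H →L[ℂ] H) : H →ₗ[ℂ] H) = ⊥)
    (τ1 : ℝ) (u1 : H) (hu1L : u1 ∈ L) (hu1 : u1 ≠ 0)
    (heig : ∀ v ∈ L, (τ1 : ℂ) * (inner ℂ (A u1 - (t : ℂ) • u1) (A v - (t : ℂ) • v) : ℂ)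
      = (inner ℂ (A u1 - (t : ℂ) • u1) v : ℂ))
    (hmin : ∀ (τ : ℝ) (u : H), u ∈ L → u ≠ 0 →
      (∀ v ∈ L, (τ : ℂ) * (inner ℂ (A u - (t : ℂ) • u) (A v - (t : ℂ) • v) : ℂ)
        = (inner ℂ (A u - (t : ℂ) • u) v : ℂ)) → τ1 ≤ τ) :
    (τ1 < 0 ↔ ∃ s : ℝ, s < t ∧ Fapp A L 1 s = t - s) ∧
    (τ1 < 0 →
      (∀ s : ℝ, s < t → Fapp A L 1 s = t - s → s = t + 1 / (2 * τ1)) ∧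
      Fapp A L 1 (t + 1 / (2 * τ1)) = -(1 / (2 * τ1)) ∧
      ‖A u1 - ((t + 1 / (2 * τ1) : ℝ) : ℂ) • u1‖ = -(1 / (2 * τ1)) * ‖u1‖) := by
  have hτQ : 0 < ‖A u1 - (t:ℂ)•u1‖ := Qpos' A L t hker u1 hu1L hu1
  have hvar := variational A hA L t hker τ1 u1 hu1L hu1 hmin
  have heq1 : τ1 * ‖A u1 - (t:ℂ)•u1‖^2 = (inner ℂ (A u1 - (t:ℂ)•u1) u1 : ℂ).re := by
    have hx : (inner ℂ (A u1 - (t:ℂ)•u1) (A u1 - (t:ℂ)•u1) : ℂ).re = ‖A u1 - (t:ℂ)•u1‖^2 := by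
      simpa using inner_self_eq_norm_sq (𝕜:=ℂ) (A u1 - (t:ℂ)•u1)
    have h := congrArg Complex.re (heig u1 hu1L)
    simp only [Complex.mul_re, Complex.ofReal_re, Complex.ofReal_im, zero_mul, sub_zero] at h
    rw [hx] at h
    exact h
  have hkey : ∀ s : ℝ, s < t → Fapp A L 1 s = t - s → 1 + 2*(t-s)*τ1 ≤ 0 := by
    intro s hst hF
    obtain ⟨c, hc, hcoer⟩ := coercive A L t hker u1 hu1L hu1
    by_contra hκ'
    push_neg at hκ'
    have hK : 0 < c^2*(1+2*(t-s)*τ1) := mul_pos (pow_pos hc 2) hκ'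
    have hts : 0 < t - s := by linarith
    have hall : ∀ ε : ℝ, 0 < ε → c^2*(1+2*(t-s)*τ1) ≤ ε*(2*(t-s)+ε) := by
      intro ε hε
      obtain ⟨u, huL, hune, hub⟩ := Fapp_approx A L s u1 hu1L hu1 ε hε
      rw [hF] at hub
      have hu2 : (0:ℝ) < ‖u‖^2 := pow_pos (norm_pos_iff.mpr hune) 2
      have h1 : ‖A u - (s:ℂ)•u‖^2 ≤ (t-s+ε)^2*‖u‖^2 := by
        have := pow_le_pow_left₀ (norm_nonneg _) hub 2
        rwa [mul_pow] at this
      have h2 : c^2*‖u‖^2 ≤ ‖A u - (t:ℂ)•u‖^2 := by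
        have h3 := hcoer u huL
        have := pow_le_pow_left₀ (mul_nonneg (le_of_lt hc) (norm_nonneg u)) h3 2
        rwa [mul_pow] at this
      have step1 : (1+2*(t-s)*τ1) * ‖A u - (t:ℂ)•u‖^2
          ≤ ‖A u - (s:ℂ)•u‖^2 - (t-s)^2*‖u‖^2 := by
        rw [expand' A s t u]
        nlinarith [mul_le_mul_of_nonneg_left (hvar u huL) (by linarith : (0:ℝ) ≤ 2*(t-s))]
      have step2 : (1+2*(t-s)*τ1) * (c^2*‖u‖^2) ≤ (1+2*(t-s)*τ1) * ‖A u - (t:ℂ)•u‖^2 :=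
        mul_le_mul_of_nonneg_left h2 (le_of_lt hκ')
      nlinarith [step1, step2, h1, hu2]
    have hD : (0:ℝ) < 2*(t-s)+1 := by linarith
    set ε := min 1 (c^2*(1+2*(t-s)*τ1)/(2*(2*(t-s)+1))) with hεdef
    have hεpos : 0 < ε := lt_min one_pos (div_pos hK (by linarith))
    have h5 := hall ε hεpos
    have hε1 : ε ≤ 1 := min_le_left _ _
    have hε2 : ε ≤ c^2*(1+2*(t-s)*τ1)/(2*(2*(t-s)+1)) := min_le_right _ _
    have hdd : (c^2*(1+2*(t-s)*τ1)/(2*(2*(t-s)+1)))*(2*(t-s)+1) = c^2*(1+2*(t-s)*τ1)/2 := by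
      field_simp
    have fact1 : ε*ε ≤ ε*1 := mul_le_mul_of_nonneg_left hε1 (le_of_lt hεpos)
    have fact2 : ε*(2*(t-s)+1) ≤ c^2*(1+2*(t-s)*τ1)/2 := by
      calc ε*(2*(t-s)+1) ≤ (c^2*(1+2*(t-s)*τ1)/(2*(2*(t-s)+1)))*(2*(t-s)+1) :=
            mul_le_mul_of_nonneg_right hε2 (le_of_lt hD)
        _ = _ := hdd
    nlinarith [h5, fact1, fact2, hK]
  have hmain : τ1 < 0 → Fapp A L 1 (t + 1/(2*τ1)) = -(1/(2*τ1)) ∧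
      ‖A u1 - ((t + 1/(2*τ1) : ℝ):ℂ)•u1‖ = -(1/(2*τ1))*‖u1‖ := by
    intro ht1
    have hτne : τ1 ≠ 0 := ne_of_lt ht1
    have hhalf : 1/(2*τ1) < 0 := div_neg_of_pos_of_neg one_pos (by linarith)
    set s0 := t + 1/(2*τ1) with hs0def
    have hts0 : t - s0 = -(1/(2*τ1)) := by rw [hs0def]; ring
    have htspos : 0 < t - s0 := by rw [hts0]; linarith
    have hκ0 : 1 + 2*(t-s0)*τ1 = 0 := by
      rw [hts0]
      field_simp
      ring
    have hnorm1 : ‖A u1 - (s0:ℂ)•u1‖ = (t - s0) * ‖u1‖ := by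
      apply eq_of_sq_eq' _ _ (norm_nonneg _) (by positivity)
      rw [mul_pow, expand' A s0 t u1]
      linear_combination ‖A u1 - (t:ℂ)•u1‖^2 * hκ0 - 2*(t-s0)*heq1
    have hFle : Fapp A L 1 s0 ≤ t - s0 := by
      have h6 := Fapp_le A L s0 u1 hu1L hu1
      rwa [hnorm1, mul_div_assoc, div_self (norm_ne_zero_iff.mpr hu1), mul_one] at h6
    have hFge : t - s0 ≤ Fapp A L 1 s0 := by
      apply Fapp_lb A L s0 _ (le_of_lt htspos) u1 hu1L hu1
      intro u huL
      apply le_of_sq_le' _ _ (norm_nonneg _)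
      rw [mul_pow, expand' A s0 t u]
      nlinarith [mul_le_mul_of_nonneg_left (hvar u huL) (by linarith : (0:ℝ) ≤ 2*(t-s0)),
        hκ0, sq_nonneg ‖A u - (t:ℂ)•u‖, sq_nonneg ‖u‖]
    refine ⟨?_, by rw [hnorm1, hts0]⟩
    rw [le_antisymm hFle hFge, hts0]
  constructor
  · constructor
    · intro ht1
      refine ⟨t + 1/(2*τ1), ?_, ?_⟩
      · have hhalf : 1/(2*τ1) < 0 := div_neg_of_pos_of_neg one_pos (by linarith)
        linarith
      · rw [(hmain ht1).1]
        ring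
    · rintro ⟨s, hst, hF⟩
      have h7 := hkey s hst hF
      nlinarith [h7, hst]
  · intro ht1
    have hτne : τ1 ≠ 0 := ne_of_lt ht1
    refine ⟨?_, (hmain ht1).1, (hmain ht1).2⟩
    intro s hst hF
    have hκle := hkey s hst hF
    have hκge : 0 ≤ 1 + 2*(t-s)*τ1 := by
      by_contra hlt
      push_neg at hlt
      have hNlt : ‖A u1 - (s:ℂ)•u1‖^2 < ((t-s)*‖u1‖)^2 := by
        rw [expand' A s t u1, mul_pow]
        nlinarith [heq1, pow_pos hτQ 2, hlt]
      have hQn : (0:ℝ) < ‖u1‖ := norm_pos_iff.mpr hu1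
      have htspos : (0:ℝ) < t - s := by linarith
      have hNlt' : ‖A u1 - (s:ℂ)•u1‖ < (t-s)*‖u1‖ := by
        nlinarith [norm_nonneg (A u1 - (s:ℂ)•u1), hNlt, mul_pos htspos hQn]
      have h8 := Fapp_le A L s u1 hu1L hu1
      rw [hF] at h8
      have h9 : (t-s) * ‖u1‖ ≤ ‖A u1 - (s:ℂ)•u1‖ := (le_div_iff₀ hQn).mp h8
      linarith
    have hκ0 : 1 + 2*(t-s)*τ1 = 0 := le_antisymm hκle hκge
    have h10 : 2*(t-s)*τ1 = -1 := by linarith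
    field_simp
    linear_combination -h10
end

section
/- Let {φ_j}_{j=1}^m be orthonormal in a Hilbert space and {w_j}_{j=1}^m vectors with ‖w_j − φ_j‖ ≤ ε_j and ε := (Σ ε_j²)^{1/2} < 1/√m. Then the Gram matrix G = [⟨w_k, w_l⟩] satisfies ‖G − I‖ ≤ √2 (2+ε) ε, G is invertible, and the Gram–Schmidt orthonormalized vectors v_j = Σ_k (G^{-1/2})_{kj} w_k satisfy ‖v_j − w_j‖ ≤ (2+ε)ε. -/
open scoped ComplexOrder

set_option maxHeartbeats 1000000

/-- The square root of a positive semidefinite matrix, as `Matrix.PosSemidef.sqrt` was defined in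
the older Mathlib (removed since). -/
noncomputable def Matrix.PosSemidef.sqrt {n 𝕜 : Type*} [Fintype n] [DecidableEq n] [RCLike 𝕜]
    {A : Matrix n n 𝕜} (hA : A.PosSemidef) : Matrix n n 𝕜 :=
  hA.1.eigenvectorUnitary.1 * Matrix.diagonal ((↑) ∘ Real.sqrt ∘ hA.1.eigenvalues) *
    (star hA.1.eigenvectorUnitary : Matrix n n 𝕜)

theorem stmt12_posSemidef_sqrt {n 𝕜 : Type*} [Fintype n] [DecidableEq n] [RCLike 𝕜]
    {A : Matrix n n 𝕜} (hA : A.PosSemidef) : hA.sqrt.PosSemidef := by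
  unfold Matrix.PosSemidef.sqrt
  have hU : (star hA.1.eigenvectorUnitary : Matrix n n 𝕜) =
      Matrix.conjTranspose (hA.1.eigenvectorUnitary.1) := by
    simp [Matrix.star_eq_conjTranspose]
  rw [hU]
  apply Matrix.PosSemidef.mul_mul_conjTranspose_same
  refine Matrix.posSemidef_diagonal_iff.mpr fun i => ?_
  rw [Function.comp_apply, RCLike.nonneg_iff]
  constructor
  · simp only [Function.comp_apply, RCLike.ofReal_re]; exact Real.sqrt_nonneg _
  · simp only [Function.comp_apply, RCLike.ofReal_im]

theorem stmt12_sqrt_mul_self {n 𝕜 : Type*} [Fintype n] [DecidableEq n] [RCLike 𝕜]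
    {A : Matrix n n 𝕜} (hA : A.PosSemidef) : hA.sqrt * hA.sqrt = A := by
  unfold Matrix.PosSemidef.sqrt
  have hUU : (star hA.1.eigenvectorUnitary : Matrix n n 𝕜) * hA.1.eigenvectorUnitary.1 = 1 :=
    Unitary.coe_star_mul_self _
  have hD : Matrix.diagonal ((↑) ∘ Real.sqrt ∘ hA.1.eigenvalues : n → 𝕜) *
      Matrix.diagonal ((↑) ∘ Real.sqrt ∘ hA.1.eigenvalues) =
      Matrix.diagonal (RCLike.ofReal ∘ hA.1.eigenvalues) := by
    rw [Matrix.diagonal_mul_diagonal]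
    congr 1
    funext i
    simp only [Function.comp_apply, ← RCLike.ofReal_mul]
    rw [Real.mul_self_sqrt (hA.eigenvalues_nonneg i)]
  conv_rhs => rw [hA.1.spectral_theorem, Unitary.conjStarAlgAut_apply]
  calc _ = hA.1.eigenvectorUnitary.1 * Matrix.diagonal ((↑) ∘ Real.sqrt ∘ hA.1.eigenvalues) *
        ((star hA.1.eigenvectorUnitary : Matrix n n 𝕜) * hA.1.eigenvectorUnitary.1) *
        Matrix.diagonal ((↑) ∘ Real.sqrt ∘ hA.1.eigenvalues) *
        (star hA.1.eigenvectorUnitary : Matrix n n 𝕜) := by simp only [Matrix.mul_assoc]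
    _ = _ := by rw [hUU, Matrix.mul_one, ← hD]; simp only [Matrix.mul_assoc]

/-- Gram–Schmidt stability. If `{φ_j}` is orthonormal and
`‖w_j - φ_j‖ ≤ ε_j` with `ε = (Σ ε_j²)^{1/2} < 1/√m`, then the Gram matrix
`G = [⟨w_k, w_l⟩]` satisfies `‖G - I‖ ≤ √2 (2+ε) ε` (operator norm), `G` is
invertible, and the orthonormalized vectors `v_j = Σ_k (G^{-1/2})_{kj} w_k`
satisfy `‖v_j - w_j‖ ≤ (2+ε) ε`. -/
theorem stmt_12 {H : Type*} [NormedAddCommGroup H] [InnerProductSpace ℂ H]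
    (m : ℕ) (φ w : Fin m → H) (hφ : Orthonormal ℂ φ)
    (εv : Fin m → ℝ) (hw : ∀ j, ‖w j - φ j‖ ≤ εv j)
    (ε : ℝ) (hε : ε = Real.sqrt (∑ j, εv j ^ 2)) (hεm : ε < 1 / Real.sqrt m)
    (G : Matrix (Fin m) (Fin m) ℂ)
    (hGdef : G = Matrix.of fun k l => (inner ℂ (w k) (w l) : ℂ))
    (hG : G.PosSemidef)
    (v : Fin m → H) (hv : ∀ j, v j = ∑ k, hG.sqrt⁻¹ k j • w k) :
    ‖Matrix.toEuclideanCLM (n := Fin m) (𝕜 := ℂ) (G - 1)‖ ≤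
        Real.sqrt 2 * (2 + ε) * ε ∧
      IsUnit G ∧ ∀ j, ‖v j - w j‖ ≤ (2 + ε) * ε := by
  classical
  have hεnn : 0 ≤ ε := hε ▸ Real.sqrt_nonneg _
  have hε1 : ε < 1 := by
    rcases Nat.eq_zero_or_pos m with hm | hm
    · exfalso
      subst hm
      simp at hεm
      linarith
    · have h1 : (1:ℝ) ≤ Real.sqrt m := by
        rw [show (1:ℝ) = Real.sqrt 1 by simp]
        exact Real.sqrt_le_sqrt (by exact_mod_cast hm)
      calc ε < 1 / Real.sqrt m := hεm
        _ ≤ 1 := by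
            rw [div_le_one (by linarith)]
            exact h1
  -- abbreviations
  set T := Matrix.toEuclideanCLM (n := Fin m) (𝕜 := ℂ) with hT
  set W : (Fin m → ℂ) → H := fun x => ∑ k, x k • w k with hWd
  set P : (Fin m → ℂ) → H := fun x => ∑ k, x k • φ k with hPd
  set Dm : (Fin m → ℂ) → H := fun x => ∑ k, x k • (w k - φ k) with hDd
  -- bound on the defect part
  have hDle : ∀ x : Fin m → ℂ, ‖Dm x‖ ≤ ε * Real.sqrt (∑ k, ‖x k‖ ^ 2) := by
    intro x
    have hcs : ∑ k, ‖x k‖ * εv k ≤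
        Real.sqrt (∑ k, ‖x k‖ ^ 2) * Real.sqrt (∑ k, εv k ^ 2) :=
      Real.sum_mul_le_sqrt_mul_sqrt _ _ _
    calc ‖Dm x‖ ≤ ∑ k, ‖x k • (w k - φ k)‖ := norm_sum_le _ _
      _ = ∑ k, ‖x k‖ * ‖w k - φ k‖ := by simp [norm_smul]
      _ ≤ ∑ k, ‖x k‖ * εv k :=
          Finset.sum_le_sum fun k _ => mul_le_mul_of_nonneg_left (hw k) (norm_nonneg _)
      _ ≤ Real.sqrt (∑ k, ‖x k‖ ^ 2) * Real.sqrt (∑ k, εv k ^ 2) := hcs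
      _ = ε * Real.sqrt (∑ k, ‖x k‖ ^ 2) := by rw [← hε, mul_comm]
  -- the orthonormal part has equal norm
  have hPinner : ∀ x y : Fin m → ℂ,
      (inner ℂ (P x) (P y) : ℂ) = ∑ k, (starRingEnd ℂ) (x k) * y k := fun x y =>
    hφ.inner_sum x y Finset.univ
  have hPnorm : ∀ x : Fin m → ℂ, ‖P x‖ = Real.sqrt (∑ k, ‖x k‖ ^ 2) := by
    intro x
    have h1 : (‖P x‖ : ℝ) ^ 2 = ∑ k, ‖x k‖ ^ 2 := by
      rw [norm_sq_eq_re_inner (𝕜 := ℂ), hPinner]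
      simp_rw [RCLike.conj_mul, map_sum, ← RCLike.ofReal_pow, RCLike.ofReal_re]
    rw [← h1, Real.sqrt_sq (norm_nonneg _)]
  have hWPD : ∀ x : Fin m → ℂ, W x = P x + Dm x := by
    intro x
    simp only [hWd, hPd, hDd, smul_sub, ← Finset.sum_add_distrib]
    refine Finset.sum_congr rfl fun k _ => ?_
    abel
  -- norm bounds for W
  have hWlb : ∀ x : Fin m → ℂ,
      (1 - ε) * Real.sqrt (∑ k, ‖x k‖ ^ 2) ≤ ‖W x‖ := by
    intro x
    rw [hWPD]
    have h5 : Real.sqrt (∑ k, ‖x k‖ ^ 2) ≤ ‖P x + Dm x‖ + ‖Dm x‖ := by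
      rw [← hPnorm x]
      calc ‖P x‖ = ‖(P x + Dm x) - Dm x‖ := by rw [add_sub_cancel_right]
        _ ≤ ‖P x + Dm x‖ + ‖Dm x‖ := norm_sub_le _ _
    have h4 := hDle x
    linarith
  -- inner products through the Gram matrix
  have hWinner : ∀ x y : Fin m → ℂ,
      (inner ℂ (W x) (W y) : ℂ) =
        ∑ k, (starRingEnd ℂ) (x k) * (∑ l, G k l * y l) := by
    intro x y
    simp only [hWd, sum_inner, inner_sum, inner_smul_left, inner_smul_right, hGdef,
      Matrix.of_apply, Finset.mul_sum]
    rw [Finset.sum_comm]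
    refine Finset.sum_congr rfl fun k _ => Finset.sum_congr rfl fun l _ => ?_
    ring
  -- application of toEuclideanCLM componentwise
  have hTapp : ∀ (A : Matrix (Fin m) (Fin m) ℂ) (y : EuclideanSpace ℂ (Fin m)) (k : Fin m),
      (T A y) k = ∑ l, A k l * y l := by
    intro A y k
    have h := congrFun (Matrix.ofLp_toEuclideanCLM (A := A) (x := y)) k
    simp only [Matrix.mulVec, dotProduct] at h
    exact h
  have hinnerT : ∀ (A : Matrix (Fin m) (Fin m) ℂ) (x y : EuclideanSpace ℂ (Fin m)),
      (inner ℂ x (T A y) : ℂ) = ∑ k, (starRingEnd ℂ) (x k) * (∑ l, A k l * y l) := by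
    intro A x y
    rw [PiLp.inner_apply]
    refine Finset.sum_congr rfl fun k _ => ?_
    rw [hTapp A y k]
    simp [RCLike.inner_apply, mul_comm]
  have hWG : ∀ x y : EuclideanSpace ℂ (Fin m),
      (inner ℂ x (T G y) : ℂ) = (inner ℂ (W (fun k => x k)) (W (fun k => y k)) : ℂ) := by
    intro x y
    rw [hinnerT, hWinner]
  -- euclidean norms
  have hEnorm : ∀ x : EuclideanSpace ℂ (Fin m),
      ‖x‖ = Real.sqrt (∑ k, ‖x k‖ ^ 2) := fun x => EuclideanSpace.norm_eq x
  -- part 1 core bound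
  have hcore : ∀ x y : EuclideanSpace ℂ (Fin m),
      ‖(inner ℂ x (T (G - 1) y) : ℂ)‖ ≤ ((2 + ε) * ε) * (‖x‖ * ‖y‖) := by
    intro x y
    have h1 : T (G - 1) y = T G y - y := by
      rw [map_sub, map_one, ContinuousLinearMap.sub_apply, ContinuousLinearMap.one_apply]
    have hxy : (inner ℂ x y : ℂ) = inner ℂ (P fun k => x k) (P fun k => y k) := by
      rw [PiLp.inner_apply, hPinner]
      simp [RCLike.inner_apply, mul_comm]
    rw [h1, inner_sub_right, hWG, hxy]
    have hsplit : (inner ℂ (W fun k => x k) (W fun k => y k) : ℂ) -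
        inner ℂ (P fun k => x k) (P fun k => y k) =
        inner ℂ (P fun k => x k) (Dm fun k => y k) +
        inner ℂ (Dm fun k => x k) (P fun k => y k) +
        inner ℂ (Dm fun k => x k) (Dm fun k => y k) := by
      rw [hWPD, hWPD, inner_add_left, inner_add_right, inner_add_right]
      ring
    rw [hsplit]
    have hnx : Real.sqrt (∑ k, ‖x k‖ ^ 2) = ‖x‖ := (hEnorm x).symm
    have hny : Real.sqrt (∑ k, ‖y k‖ ^ 2) = ‖y‖ := (hEnorm y).symm
    have hPx : ‖P fun k => x k‖ = ‖x‖ := by rw [hPnorm, hnx]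
    have hPy : ‖P fun k => y k‖ = ‖y‖ := by rw [hPnorm, hny]
    have hDx : ‖Dm fun k => x k‖ ≤ ε * ‖x‖ := by rw [← hnx]; exact hDle _
    have hDy : ‖Dm fun k => y k‖ ≤ ε * ‖y‖ := by rw [← hny]; exact hDle _
    have c1 := norm_inner_le_norm (𝕜 := ℂ) (P fun k => x k) (Dm fun k => y k)
    have c2 := norm_inner_le_norm (𝕜 := ℂ) (Dm fun k => x k) (P fun k => y k)
    have c3 := norm_inner_le_norm (𝕜 := ℂ) (Dm fun k => x k) (Dm fun k => y k)
    rw [hPx] at c1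
    rw [hPy] at c2
    have b1 : ‖x‖ * ‖Dm fun k => y k‖ ≤ ‖x‖ * (ε * ‖y‖) :=
      mul_le_mul_of_nonneg_left hDy (norm_nonneg x)
    have b2 : ‖Dm fun k => x k‖ * ‖y‖ ≤ (ε * ‖x‖) * ‖y‖ :=
      mul_le_mul_of_nonneg_right hDx (norm_nonneg y)
    have b3 : ‖Dm fun k => x k‖ * ‖Dm fun k => y k‖ ≤ (ε * ‖x‖) * (ε * ‖y‖) :=
      mul_le_mul hDx hDy (norm_nonneg _) (by positivity)
    refine le_trans (norm_add_le _ _) ?_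
    refine le_trans (add_le_add (norm_add_le _ _) le_rfl) ?_
    nlinarith [norm_nonneg x, norm_nonneg y]
  -- operator norm bound
  have hop : ‖T (G - 1)‖ ≤ (2 + ε) * ε := by
    refine ContinuousLinearMap.opNorm_le_bound _ (by positivity) fun y => ?_
    set z := T (G - 1) y with hz
    rcases eq_or_ne z 0 with h0 | h0
    · rw [h0, norm_zero]
      positivity
    · have h2 : ‖z‖ ^ 2 = ‖(inner ℂ z z : ℂ)‖ := by
        rw [inner_self_eq_norm_sq_to_K, norm_pow]
        norm_num
      have h3 := hcore z y
      rw [← hz] at h3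
      rw [← h2] at h3
      have h5 : 0 < ‖z‖ := norm_pos_iff.mpr h0
      nlinarith
  have hs2 : (1:ℝ) ≤ Real.sqrt 2 := by
    rw [show (1:ℝ) = Real.sqrt 1 by simp]
    exact Real.sqrt_le_sqrt one_le_two
  -- part 2: positive definiteness
  have hGpd : G.PosDef := by
    refine Matrix.PosDef.of_dotProduct_mulVec_pos hG.1 fun x hx => ?_
    have hd : dotProduct (star x) (G.mulVec x) =
        ∑ k, (starRingEnd ℂ) (x k) * (∑ l, G k l * x l) := by
      simp [dotProduct, Matrix.mulVec, Pi.star_apply, Complex.star_def]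
    have h6 : dotProduct (star x) (G.mulVec x) = (inner ℂ (W x) (W x) : ℂ) := by
      rw [hd, hWinner]
    have hx0 : (0:ℝ) < ∑ k, ‖x k‖ ^ 2 := by
      have hex : ∃ k, x k ≠ 0 := by
        by_contra h
        push_neg at h
        exact hx (funext h)
      obtain ⟨k, hk⟩ := hex
      refine Finset.sum_pos' (fun i _ => by positivity) ⟨k, Finset.mem_univ k, by simpa using pow_pos (norm_pos_iff.mpr hk) 2⟩
    have h7 : 0 < ‖W x‖ := by
      have := hWlb x
      have hsp : 0 < Real.sqrt (∑ k, ‖x k‖ ^ 2) := Real.sqrt_pos.mpr hx0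
      nlinarith
    rw [h6, inner_self_eq_norm_sq_to_K]
    have h7' : (0:ℝ) < ‖W x‖ ^ 2 := by positivity
    rw [← RCLike.ofReal_pow]
    exact RCLike.ofReal_pos.mpr h7' 
  have hGunit : IsUnit G := hGpd.isUnit
  -- part 3 setup
  set S := hG.sqrt with hSd
  have hSps : S.PosSemidef := stmt12_posSemidef_sqrt hG
  have hSS : S * S = G := stmt12_sqrt_mul_self hG
  clear_value S
  have hGdet : IsUnit G.det := (Matrix.isUnit_iff_isUnit_det G).1 hGunit
  have hSdet : IsUnit S.det := by
    have h8 : IsUnit (S.det * S.det) := by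
      rw [← Matrix.det_mul, hSS]
      exact hGdet
    exact isUnit_of_mul_isUnit_left h8
  have h1S : ((1 : Matrix (Fin m) (Fin m) ℂ) + S).PosDef :=
    Matrix.PosDef.add_posSemidef Matrix.PosDef.one hSps
  have h1Sdet : IsUnit ((1 : Matrix (Fin m) (Fin m) ℂ) + S).det :=
    (Matrix.isUnit_iff_isUnit_det _).1 h1S.isUnit
  have hfact : ((1 : Matrix (Fin m) (Fin m) ℂ) - S) * (1 + S) = 1 - G := by
    rw [sub_mul, mul_add, mul_add, one_mul, mul_one, one_mul, hSS]
    abel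
  have h1mS : (1 : Matrix (Fin m) (Fin m) ℂ) - S = (1 - G) * (1 + S)⁻¹ := by
    rw [← hfact, Matrix.mul_assoc, Matrix.mul_nonsing_inv _ h1Sdet, Matrix.mul_one]
  -- positivity of S through T
  have hIS : ∀ y : EuclideanSpace ℂ (Fin m), 0 ≤ ((inner ℂ y (T S y) : ℂ)).re := by
    intro y
    have h9 := hSps.dotProduct_mulVec_nonneg (fun k => y k)
    have h10 : dotProduct (star fun k => y k) (S.mulVec fun k => y k) =
        (inner ℂ y (T S y) : ℂ) := by
      rw [hinnerT]
      simp [dotProduct, Matrix.mulVec, Pi.star_apply, Complex.star_def]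
    rw [← h10]
    exact (Complex.le_def.mp h9).1
  -- norm of the inverse of 1 + S is at most 1
  have hinv1 : ‖T ((1 + S)⁻¹)‖ ≤ 1 := by
    refine ContinuousLinearMap.opNorm_le_bound _ zero_le_one fun z => ?_
    set y := T ((1 + S)⁻¹) z with hy
    have hyz : T (1 + S) y = z := by
      have h := congrArg (fun A : Matrix (Fin m) (Fin m) ℂ => T A z)
        (Matrix.mul_nonsing_inv _ h1Sdet)
      simp only [map_mul, map_one, ContinuousLinearMap.mul_apply,
        ContinuousLinearMap.one_apply] at h
      rw [hy]
      exact h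
    have h11 : (inner ℂ y z : ℂ) = inner ℂ y y + inner ℂ y (T S y) := by
      rw [← hyz, map_add, map_one, ContinuousLinearMap.add_apply,
        ContinuousLinearMap.one_apply, inner_add_right]
    have h13 : ((inner ℂ y y : ℂ)).re = ‖y‖ ^ 2 := by
      rw [norm_sq_eq_re_inner (𝕜 := ℂ) y]
      simp
    have h12 : ‖y‖ ^ 2 ≤ ((inner ℂ y z : ℂ)).re := by
      rw [h11, Complex.add_re, h13]
      have := hIS y
      linarith
    have h14 : ((inner ℂ y z : ℂ)).re ≤ ‖y‖ * ‖z‖ :=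
      le_trans (Complex.re_le_norm _) (by
        exact norm_inner_le_norm y z)
    rcases eq_or_lt_of_le (norm_nonneg y) with h0 | h0
    · rw [one_mul, ← h0]
      exact norm_nonneg z
    · rw [one_mul]
      nlinarith
  -- bound on 1 - S
  have h1mSnorm : ‖T (1 - S)‖ ≤ (2 + ε) * ε := by
    rw [h1mS, map_mul]
    have h15 : ‖T (1 - G)‖ = ‖T (G - 1)‖ := by
      rw [← neg_sub G 1, map_neg, norm_neg]
    calc ‖T (1 - G) * T ((1 + S)⁻¹)‖ ≤ ‖T (1 - G)‖ * ‖T ((1 + S)⁻¹)‖ := norm_mul_le _ _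
      _ ≤ ‖T (G - 1)‖ * 1 := by
          rw [h15]
          exact mul_le_mul_of_nonneg_left hinv1 (norm_nonneg _)
      _ ≤ (2 + ε) * ε := by rw [mul_one]; exact hop
  refine ⟨?_, hGunit, ?_⟩
  · have hge : 0 ≤ (2 + ε) * ε := mul_nonneg (by linarith) hεnn
    have hmul := mul_le_mul_of_nonneg_right hs2 hge
    rw [one_mul] at hmul
    calc ‖Matrix.toEuclideanCLM (n := Fin m) (𝕜 := ℂ) (G - 1)‖ ≤ (2 + ε) * ε := hop
      _ ≤ Real.sqrt 2 * ((2 + ε) * ε) := hmul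
      _ = Real.sqrt 2 * (2 + ε) * ε := by ring
  · intro j
    set e : EuclideanSpace ℂ (Fin m) := EuclideanSpace.single j (1:ℂ) with he
    set xj : EuclideanSpace ℂ (Fin m) := T (S⁻¹ - 1) e with hxj
    have hxjk : ∀ k, xj k = (S⁻¹ - 1) k j := by
      intro k
      rw [hxj, hTapp]
      simp [he, EuclideanSpace.single_apply]
    have hwj : w j = ∑ k, ((1 : Matrix (Fin m) (Fin m) ℂ) k j) • w k := by
      simp [Matrix.one_apply]
    have hvw : v j - w j = W (fun k => xj k) := by
      rw [hv j, hwj, hWd]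
      simp only [← Finset.sum_sub_distrib]
      refine Finset.sum_congr rfl fun k _ => ?_
      rw [hxjk, Matrix.sub_apply, sub_smul]
    have hadj : ContinuousLinearMap.adjoint (T S) = T S := by
      rw [← ContinuousLinearMap.star_eq_adjoint, ← map_star]
      congr 1
      exact hSps.1
    have hTSxj : T S xj = T (1 - S) e := by
      have hSm : S * (S⁻¹ - 1) = 1 - S := by
        rw [mul_sub, Matrix.mul_nonsing_inv _ hSdet, mul_one]
      have h := congrArg (fun A : Matrix (Fin m) (Fin m) ℂ => T A e) hSm
      simp only [map_mul, ContinuousLinearMap.mul_apply] at h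
      rw [hxj]
      exact h
    have e1 : (inner ℂ (W fun k => xj k) (W fun k => xj k) : ℂ) =
        inner ℂ (T S xj) (T S xj) := by
      calc (inner ℂ (W fun k => xj k) (W fun k => xj k) : ℂ)
          = inner ℂ xj (T G xj) := (hWG xj xj).symm
        _ = inner ℂ xj (T S (T S xj)) := by
            rw [← hSS, map_mul, ContinuousLinearMap.mul_apply]
        _ = inner ℂ xj ((ContinuousLinearMap.adjoint (T S)) (T S xj)) := by rw [hadj]
        _ = inner ℂ (T S xj) (T S xj) := ContinuousLinearMap.adjoint_inner_right _ _ _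
    have hnsq : ‖v j - w j‖ ^ 2 = ‖T (1 - S) e‖ ^ 2 := by
      rw [norm_sq_eq_re_inner (𝕜 := ℂ), norm_sq_eq_re_inner (𝕜 := ℂ), hvw, e1, hTSxj]
    have hnd : ‖v j - w j‖ = ‖T (1 - S) e‖ := by
      have h16 := congrArg Real.sqrt hnsq
      rwa [Real.sqrt_sq (norm_nonneg _), Real.sqrt_sq (norm_nonneg _)] at h16
    rw [hnd]
    calc ‖T (1 - S) e‖ ≤ ‖T (1 - S)‖ * ‖e‖ := (T (1 - S)).le_opNorm e
      _ = ‖T (1 - S)‖ := by rw [he, EuclideanSpace.norm_single, norm_one, mul_one]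
      _ ≤ (2 + ε) * ε := h1mSnorm
end

section
/- Let {w_j}_{j=1}^m ⊂ L be orthonormal with ‖(A−t)(w_j − φ_j)‖ ≤ ε_j, where {φ_j}_{j=1}^m are orthonormal eigenvectors of |A−t| with |A−t|φ_j = 𝔡_j(t) φ_j. Then F_L^j(t) − 𝔡_j(t) ≤ (Σ_{k=1}^j ε_k²)^{1/2} for all j = 1,…,m. -/
open scoped InnerProductSpace

variable {H : Type*} [NormedAddCommGroup H] [InnerProductSpace ℂ H] [CompleteSpace H]

section aux14

private lemma aux_sqle14 {x y : ℝ} (hy : 0 ≤ y) (h : x^2 ≤ y^2) (hx : 0 ≤ x) : x ≤ y := by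
  nlinarith

private lemma aux_norm_sum14 {H : Type*} [NormedAddCommGroup H] [InnerProductSpace ℂ H]
    {n : ℕ} {ψ : Fin n → H} (hψ : Orthonormal ℂ ψ) (c : Fin n → ℂ) :
    ‖∑ i, c i • ψ i‖^2 = ∑ i, ‖c i‖^2 := by
  rw [← inner_self_eq_norm_sq (𝕜 := ℂ), hψ.inner_sum]
  simp [RCLike.conj_mul, ← Complex.ofReal_pow]

private lemma aux_normTsum14 {H : Type*} [NormedAddCommGroup H] [InnerProductSpace ℂ H]
    (T : H →L[ℂ] H) {n : ℕ} (ψ : Fin n → H) (dv : Fin n → ℝ)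
    (h : ∀ i l : Fin n, (inner ℂ (T (ψ i)) (T (ψ l)) : ℂ) = if i = l then ((dv i : ℂ))^2 else 0)
    (c : Fin n → ℂ) :
    ‖T (∑ i, c i • ψ i)‖^2 = ∑ i, ‖c i‖^2 * (dv i)^2 := by
  rw [map_sum]
  simp_rw [map_smul]
  rw [← inner_self_eq_norm_sq (𝕜 := ℂ), sum_inner]
  simp_rw [inner_sum, inner_smul_left, inner_smul_right, h]
  simp [Finset.mul_sum, mul_ite, mul_zero, RCLike.conj_mul, ← Complex.ofReal_pow]
  refine Finset.sum_congr rfl fun x _ => ?_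
  have : ‖c x‖ ^ 2 = (c x).re^2 + (c x).im^2 := by
    rw [Complex.sq_norm, Complex.normSq_apply]; ring
  rw [this]; ring

variable {H : Type*} [NormedAddCommGroup H] [InnerProductSpace ℂ H] [CompleteSpace H]

private lemma dd_nonneg14 (A : H →L[ℂ] H) (j : ℕ) (t : ℝ) : 0 ≤ dd A j t :=
  Real.sInf_nonneg (fun _ hr => hr.1)

private lemma dd_le14 (A : H →L[ℂ] H) {j : ℕ} (t : ℝ) {r : ℝ} (h0 : 0 ≤ r)
    {V : Submodule ℂ H} (hV : Module.finrank ℂ V = j)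
    (hb : ∀ u ∈ V, ‖A u - (t : ℂ) • u‖ ≤ r * ‖u‖) : dd A j t ≤ r :=
  csInf_le ⟨0, fun _ hx => hx.1⟩ ⟨h0, V, hV, hb⟩

private lemma dd_mono14 (A : H →L[ℂ] H) (t : ℝ) {j k : ℕ} (hjk : j ≤ k)
    (hne : {r : ℝ | 0 ≤ r ∧ ∃ V : Submodule ℂ H, Module.finrank ℂ V = k ∧
      ∀ u ∈ V, ‖A u - (t : ℂ) • u‖ ≤ r * ‖u‖}.Nonempty) :
    dd A j t ≤ dd A k t := by
  refine le_csInf hne ?_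
  rintro r ⟨h0, V, hV, hb⟩
  rcases Nat.eq_zero_or_pos k with hk | hk
  · subst hk
    exact dd_le14 A t h0 (by rw [hV]; omega) hb
  · have : FiniteDimensional ℂ V :=
      Module.finite_of_finrank_pos (by rw [hV]; exact hk)
    have hjk' : j ≤ Module.finrank ℂ V := hV ▸ hjk
    let b := Module.finBasisOfFinrankEq ℂ V hV
    set g : Fin j → H := fun i => ((b (Fin.castLE hjk i) : V) : H) with hg
    have li : LinearIndependent ℂ g := by
      have h1 := b.linearIndependent.comp (Fin.castLE hjk) (Fin.castLE_injective hjk)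
      exact h1.map' V.subtype V.ker_subtype
    refine dd_le14 A t h0 (V := Submodule.span ℂ (Set.range g)) ?_ ?_
    · rw [finrank_span_eq_card li, Fintype.card_fin]
    · intro u hu
      refine hb u (Submodule.span_le.mpr ?_ hu)
      rintro x ⟨i, rfl⟩
      exact (b (Fin.castLE hjk i)).2

end aux14

/-- if `{w_j} ⊂ L` is orthonormal with
`‖(A-t)(w_j - φ_j)‖ ≤ ε_j` where `{φ_j}` are orthonormal eigenvectors of
`|A-t|` with `|A-t|φ_j = 𝔡_j(t) φ_j` (equivalently `(A-t)²φ_j = 𝔡_j(t)²φ_j`),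
then `F_L^j(t) - 𝔡_j(t) ≤ (Σ_{k=1}^j ε_k²)^{1/2}`. -/
theorem stmt_14 (A : H →L[ℂ] H) (hA : IsSelfAdjoint A)
    (L : Submodule ℂ H) [FiniteDimensional ℂ L] (t : ℝ)
    (m : ℕ) (φ w : Fin m → H) (hφon : Orthonormal ℂ φ) (hwon : Orthonormal ℂ w)
    (hwL : ∀ j, w j ∈ L)
    (hφeig : ∀ j : Fin m,
      A (A (φ j) - (t : ℂ) • φ j) - (t : ℂ) • (A (φ j) - (t : ℂ) • φ j) =
        (((dd A (j.1 + 1) t : ℝ) : ℂ) ^ 2) • φ j)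
    (εv : Fin m → ℝ)
    (hε : ∀ j, ‖A (w j - φ j) - (t : ℂ) • (w j - φ j)‖ ≤ εv j) :
    ∀ j : Fin m, Fapp A L (j.1 + 1) t - dd A (j.1 + 1) t ≤
      Real.sqrt (∑ k ∈ Finset.univ.filter (fun k => k ≤ j), εv k ^ 2) := by
  classical
  intro j
  set T : H →L[ℂ] H := A - (t : ℂ) • 1 with hTdef
  have hT : ∀ u : H, T u = A u - (t : ℂ) • u := fun u => by
    simp [hTdef, ContinuousLinearMap.sub_apply, ContinuousLinearMap.smul_apply,
      ContinuousLinearMap.one_apply]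
  have hsym : ∀ x y : H, (inner ℂ (T x) y : ℂ) = inner ℂ x (T y) := by
    intro x y
    have hAs := (ContinuousLinearMap.isSelfAdjoint_iff_isSymmetric.mp hA) x y
    simp only [ContinuousLinearMap.coe_coe] at hAs
    rw [hT, hT, inner_sub_left, inner_sub_right, hAs, inner_smul_left, inner_smul_right,
      Complex.conj_ofReal]
  set d : Fin m → ℝ := fun k => dd A (k.1 + 1) t with hd
  have hd0 : ∀ k, 0 ≤ d k := fun k => dd_nonneg14 A _ t
  have hTT : ∀ k : Fin m, T (T (φ k)) = (((d k : ℝ) : ℂ))^2 • φ k := by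
    intro k
    have := hφeig k
    rw [hT, hT]
    exact this
  have hinner : ∀ i l : Fin m, (inner ℂ (T (φ i)) (T (φ l)) : ℂ)
      = if i = l then (((d i : ℝ) : ℂ))^2 else 0 := by
    intro i l
    rw [hsym, hTT l, inner_smul_right, orthonormal_iff_ite.mp hφon i l]
    by_cases h : i = l <;> simp [h]
  -- index embedding
  set n := j.1 + 1 with hn
  have hjm : j.1 < m := j.2
  set e : Fin n → Fin m := fun i => ⟨i.1, lt_of_le_of_lt (Nat.lt_succ_iff.mp i.2) hjm⟩
    with he
  have he_inj : Function.Injective e := by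
    intro a b hab
    have : (e a).1 = (e b).1 := congrArg Fin.val hab
    simp only [he] at this
    exact Fin.ext this
  have hinner' : ∀ i l : Fin n,
      (inner ℂ (T (φ (e i))) (T (φ (e l))) : ℂ) = if i = l then (((d (e i) : ℝ) : ℂ))^2 else 0 := by
    intro i l
    rw [hinner (e i) (e l)]
    by_cases h : i = l
    · simp [h]
    · rw [if_neg (fun hh => h (he_inj hh)), if_neg h]
  -- nonemptiness of the dd-defining set at level n
  have hne : {r : ℝ | 0 ≤ r ∧ ∃ V : Submodule ℂ H, Module.finrank ℂ V = n ∧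
      ∀ u ∈ V, ‖A u - (t : ℂ) • u‖ ≤ r * ‖u‖}.Nonempty := by
    refine ⟨Real.sqrt (∑ i : Fin n, (d (e i))^2), Real.sqrt_nonneg _,
      Submodule.span ℂ (Set.range (fun i : Fin n => φ (e i))), ?_, ?_⟩
    · have h5 := finrank_span_eq_card ((hφon.comp e he_inj).linearIndependent)
      rw [Fintype.card_fin] at h5
      exact h5
    · intro u hu
      rw [Submodule.mem_span_range_iff_exists_fun] at hu
      obtain ⟨c, hc⟩ := hu
      have hnu : ‖u‖^2 = ∑ i, ‖c i‖^2 := by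
        rw [← hc]; exact aux_norm_sum14 (hφon.comp e he_inj) c
      have hTu : ‖T u‖^2 = ∑ i, ‖c i‖^2 * (d (e i))^2 := by
        rw [← hc]; exact aux_normTsum14 T _ _ hinner' c
      have hb : ‖T u‖^2 ≤ (∑ i : Fin n, (d (e i))^2) * ‖u‖^2 := by
        rw [hTu, hnu]
        calc ∑ i, ‖c i‖^2 * (d (e i))^2
            ≤ ∑ i, (∑ l, ‖c l‖^2) * (d (e i))^2 := by
              refine Finset.sum_le_sum fun i _ => ?_
              have h6 : ‖c i‖^2 ≤ ∑ l, ‖c l‖^2 :=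
                Finset.single_le_sum (f := fun l => ‖c l‖^2)
                  (fun l _ => sq_nonneg _) (Finset.mem_univ i)
              nlinarith [sq_nonneg (d (e i))]
          _ = (∑ i : Fin n, (d (e i))^2) * ∑ l, ‖c l‖^2 := by
              rw [← Finset.mul_sum, mul_comm]
      have := aux_sqle14 (x := ‖T u‖) (y := Real.sqrt (∑ i : Fin n, (d (e i))^2) * ‖u‖)
        (by positivity) ?_ (norm_nonneg _)
      · rw [hT] at this; exact this
      · rw [mul_pow, Real.sq_sqrt (by positivity)]; exact hb
  have he_le : ∀ i : Fin n, d (e i) ≤ d j := by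
    intro i
    have h7 : (e i).1 = i.1 := rfl
    have h8 : (i : ℕ) < j.1 + 1 := i.2
    exact dd_mono14 A t (by omega : (e i).1 + 1 ≤ j.1 + 1) hne
  -- the sum reindexing
  have himg : Finset.univ.filter (fun k => k ≤ j) = Finset.image e Finset.univ := by
    ext k
    simp only [Finset.mem_filter, Finset.mem_image, Finset.mem_univ, true_and]
    constructor
    · intro hk
      exact ⟨⟨k.1, Nat.lt_succ_of_le hk⟩, Fin.ext rfl⟩
    · rintro ⟨i, rfl⟩
      exact Fin.mk_le_mk.mpr (Nat.lt_succ_iff.mp i.2)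
  have hsum_eq : ∑ k ∈ Finset.univ.filter (fun k => k ≤ j), εv k ^ 2
      = ∑ i : Fin n, εv (e i) ^ 2 := by
    rw [himg, Finset.sum_image (fun a _ b _ h => he_inj h)]
  set E : ℝ := Real.sqrt (∑ i : Fin n, εv (e i) ^ 2) with hE
  have hgoal : Fapp A L n t ≤ d j + E := by
    have hε0 : ∀ k, 0 ≤ εv k := fun k => le_trans (norm_nonneg _) (hε k)
    refine csInf_le ⟨0, fun x hx => hx.1⟩ ⟨add_nonneg (hd0 j) (Real.sqrt_nonneg _),
      Submodule.span ℂ (Set.range (fun i : Fin n => w (e i))), ?_, ?_, ?_⟩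
    · rw [Submodule.span_le]
      rintro x ⟨i, rfl⟩
      exact hwL (e i)
    · have h5 := finrank_span_eq_card ((hwon.comp e he_inj).linearIndependent)
      rw [Fintype.card_fin] at h5
      exact h5
    · intro u hu
      rw [Submodule.mem_span_range_iff_exists_fun] at hu
      obtain ⟨c, hc⟩ := hu
      have hnu : ‖u‖^2 = ∑ i, ‖c i‖^2 := by
        rw [← hc]; exact aux_norm_sum14 (hwon.comp e he_inj) c
      have hnu' : ‖u‖ = Real.sqrt (∑ i, ‖c i‖^2) := by
        rw [← hnu, Real.sqrt_sq (norm_nonneg _)]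
      set a : H := ∑ i, c i • φ (e i) with ha
      have hTa : ‖T a‖ ≤ d j * ‖u‖ := by
        have h1 : ‖T a‖^2 = ∑ i, ‖c i‖^2 * (d (e i))^2 := aux_normTsum14 T _ _ hinner' c
        refine aux_sqle14 (mul_nonneg (hd0 j) (norm_nonneg _)) ?_ (norm_nonneg _)
        rw [h1, mul_pow, hnu, Finset.mul_sum]
        refine Finset.sum_le_sum fun i _ => ?_
        have h9 : d (e i) ^ 2 ≤ d j ^ 2 := pow_le_pow_left₀ (hd0 (e i)) (he_le i) 2
        nlinarith [sq_nonneg (‖c i‖)]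
      have hua : u - a = ∑ i, c i • (w (e i) - φ (e i)) := by
        rw [← hc, ha, ← Finset.sum_sub_distrib]
        exact Finset.sum_congr rfl fun i _ => (smul_sub _ _ _).symm
      have hTb : ‖T (u - a)‖ ≤ ‖u‖ * E := by
        have h2 : T (u - a) = ∑ i, c i • T (w (e i) - φ (e i)) := by
          rw [hua, map_sum]; exact Finset.sum_congr rfl fun i _ => map_smul _ _ _
        have h3 : ‖T (u - a)‖ ≤ ∑ i, ‖c i‖ * εv (e i) := by
          rw [h2]
          refine (norm_sum_le _ _).trans (Finset.sum_le_sum fun i _ => ?_)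
          rw [norm_smul]
          have := hε (e i)
          rw [← hT] at this
          exact mul_le_mul_of_nonneg_left this (norm_nonneg _)
        refine h3.trans ?_
        have h4 : (∑ i, ‖c i‖ * εv (e i))^2 ≤ (∑ i, ‖c i‖^2) * (∑ i : Fin n, εv (e i)^2) :=
          Finset.sum_mul_sq_le_sq_mul_sq _ _ _
        refine aux_sqle14 (by positivity) ?_
          (Finset.sum_nonneg fun i _ => mul_nonneg (norm_nonneg _) (hε0 _))
        rw [mul_pow, hnu, Real.sq_sqrt (by positivity)]
        exact h4
      have hsplit : ‖T u‖ ≤ ‖T a‖ + ‖T (u - a)‖ := by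
        have : T u = T a + T (u - a) := by rw [← map_add]; congr 1; abel
        rw [this]; exact norm_add_le _ _
      have : ‖T u‖ ≤ (d j + E) * ‖u‖ := by
        calc ‖T u‖ ≤ ‖T a‖ + ‖T (u - a)‖ := hsplit
          _ ≤ d j * ‖u‖ + ‖u‖ * E := add_le_add hTa hTb
          _ = (d j + E) * ‖u‖ := by ring
      rw [← hT]
      exact this
  have hgoal2 : Real.sqrt (∑ k ∈ Finset.univ.filter (fun k => k ≤ j), εv k ^ 2) = E := by
    rw [hE, hsum_eq]
  rw [hgoal2, sub_le_iff_le_add]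
  calc Fapp A L (j.1 + 1) t ≤ d j + E := hgoal
    _ = E + dd A (j.1 + 1) t := by rw [hd]; ring
end
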